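/- arXiv:2105.10711 — 8 statements merged into one kernel-verified Lean document; each statement's English description precedes it below -/
import Mathlib

section
/- Let λ, λ₁, λ₂ be real numbers with 0 < λ < 1 < λ₁ < λ₂ and set α = λ + λ₁ − λ₂ − λλ₁ + λλ₂ + λ₁λ₂. Then α² − 4λλ₁λ₂ > 0. (In fact, α² − 4λλ₁λ₂ = (α − 2)² + 4(1 − λ)(λ₁ − 1)(1 + λ₂).) -/
theorem stmt_0 (l l1 l2 : ℝ) (h0 : 0 < l) (h1 : l < 1) (h2 : 1 < l1) (h3 : l1 < l2) :
    (l + l1 - l2 - l * l1 + l * l2 + l1 * l2) ^ 2 - 4 * l * l1 * l2 > 0 ∧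
    (l + l1 - l2 - l * l1 + l * l2 + l1 * l2) ^ 2 - 4 * l * l1 * l2 =
      (l + l1 - l2 - l * l1 + l * l2 + l1 * l2 - 2) ^ 2 + 4 * (1 - l) * (l1 - 1) * (1 + l2) := by
  constructor
  · nlinarith [sq_nonneg (l + l1 - l2 - l * l1 + l * l2 + l1 * l2 - 2), mul_pos (mul_pos (sub_pos.mpr h1) (sub_pos.mpr h2)) (by linarith : (0:ℝ) < 1 + l2)]
  · ring
end

section
/- Let λ, λ₁, λ₂ be real numbers with 0 < λ < 1 < λ₁ < λ₂. Define α = λ + λ₁ − λ₂ − λλ₁ + λλ₂ + λ₁λ₂, a = √((α − √(α² − 4λλ₁λ₂))/2), and b = √((α + √(α² − 4λλ₁λ₂))/2). Then a and b are real and satisfy 0 < λ < √λ < a < 1 < λ₁ < b < λ₂. -/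
theorem stmt_1 (l l1 l2 : ℝ) (h0 : 0 < l) (h1 : l < 1) (h2 : 1 < l1) (h3 : l1 < l2) :
    let α : ℝ := l + l1 - l2 - l * l1 + l * l2 + l1 * l2
    let a : ℝ := Real.sqrt ((α - Real.sqrt (α ^ 2 - 4 * l * l1 * l2)) / 2)
    let b : ℝ := Real.sqrt ((α + Real.sqrt (α ^ 2 - 4 * l * l1 * l2)) / 2)
    0 < l ∧ l < Real.sqrt l ∧ Real.sqrt l < a ∧ a < 1 ∧ 1 < l1 ∧ l1 < b ∧ b < l2 := by
  intro α a b
  have hα : α = l + l1 - l2 - l * l1 + l * l2 + l1 * l2 := rfl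
  have ha : a = Real.sqrt ((α - Real.sqrt (α ^ 2 - 4 * l * l1 * l2)) / 2) := rfl
  have hb : b = Real.sqrt ((α + Real.sqrt (α ^ 2 - 4 * l * l1 * l2)) / 2) := rfl
  clear_value α a b
  rw [ha, hb]
  have hl2 : (1 : ℝ) < l2 := h2.trans h3
  have hl1p : (0 : ℝ) < l1 := by linarith
  have hl2p : (0 : ℝ) < l2 := by linarith
  -- positivity of the discriminant
  have hD : 0 < α ^ 2 - 4 * l * l1 * l2 := by
    nlinarith [sq_nonneg (α - 2 * l1), mul_pos (mul_pos hl1p (by linarith : (0:ℝ) < l2 - l)) (by linarith : (0:ℝ) < l1 - 1)]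
  set s : ℝ := Real.sqrt (α ^ 2 - 4 * l * l1 * l2) with hsdef
  have hs0 : 0 ≤ s := Real.sqrt_nonneg _
  have hs2 : s ^ 2 = α ^ 2 - 4 * l * l1 * l2 := Real.sq_sqrt hD.le
  have hsp : 0 < s := Real.sqrt_pos.mpr hD
  have hαp : 0 < α := by nlinarith [mul_pos h0 (by linarith : (0:ℝ) < 1 - l1 + l2)]
  have hsα : s < α := by
    have hp : 0 < l * l1 * l2 := mul_pos (mul_pos h0 hl1p) hl2p
    exact lt_of_pow_lt_pow_left₀ 2 hαp.le (by linarith)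
  -- a² bounds : l < (α - s)/2 < 1
  have hA : 0 < α - 2 * l := by nlinarith [mul_pos (by linarith : (0:ℝ) < l1 - 1) (by linarith : (0:ℝ) < 1 - l + l2)]
  have hkey1 : 0 < (α - 2 * l) ^ 2 - s ^ 2 := by
    have : (α - 2 * l) ^ 2 - s ^ 2 = 4 * (l * ((l2 - l1) * (1 - l))) := by
      rw [hs2, hα]; ring
    rw [this]
    exact mul_pos (by norm_num) (mul_pos h0 (mul_pos (by linarith) (by linarith)))
  have h_l_lt : l < (α - s) / 2 := by
    have := lt_of_pow_lt_pow_left₀ 2 hA.le (show s ^ 2 < (α - 2 * l) ^ 2 by linarith)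
    linarith
  have hkey2 : 0 < s ^ 2 - (α - 2) ^ 2 := by
    have : s ^ 2 - (α - 2) ^ 2 = 4 * ((1 - l) * ((l1 - 1) * (1 + l2))) := by
      rw [hs2, hα]; ring
    rw [this]
    exact mul_pos (by norm_num) (mul_pos (by linarith) (mul_pos (by linarith) (by linarith)))
  have h_lt_1 : (α - s) / 2 < 1 := by
    have := lt_of_pow_lt_pow_left₀ 2 hs0 (show (α - 2) ^ 2 < s ^ 2 by linarith)
    linarith
  -- b² bounds : l1² < (α + s)/2 < l2²
  have hkey3 : 0 < s ^ 2 - (2 * l1 ^ 2 - α) ^ 2 := by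
    have : s ^ 2 - (2 * l1 ^ 2 - α) ^ 2 = 4 * (l1 * ((l2 - l1) * ((l1 + l) * (l1 - 1)))) := by
      rw [hs2, hα]; ring
    rw [this]
    exact mul_pos (by norm_num) (mul_pos hl1p (mul_pos (by linarith) (mul_pos (by linarith) (by linarith))))
  have h_l1_lt : l1 ^ 2 < (α + s) / 2 := by
    have := lt_of_pow_lt_pow_left₀ 2 hs0 (show (2 * l1 ^ 2 - α) ^ 2 < s ^ 2 by linarith)
    linarith
  have hB : 0 < 2 * l2 ^ 2 - α := by
    have p1 : 0 < (1 - l) * (1 - l1 + l2) := mul_pos (by linarith) (by linarith)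
    have p2 : 0 < (l2 - l1) * l2 := mul_pos (by linarith) hl2p
    have p3 : 0 < (l2 - 1) * (l2 + 1) := mul_pos (by linarith) (by linarith)
    linarith [p1, p2, p3]
  have hkey4 : 0 < (2 * l2 ^ 2 - α) ^ 2 - s ^ 2 := by
    have : (2 * l2 ^ 2 - α) ^ 2 - s ^ 2 = 4 * (l2 * ((l2 - l1) * ((l2 + 1) * (l2 - l)))) := by
      rw [hs2, hα]; ring
    rw [this]
    exact mul_pos (by norm_num) (mul_pos hl2p (mul_pos (by linarith) (mul_pos (by linarith) (by linarith))))
  have h_lt_l2 : (α + s) / 2 < l2 ^ 2 := by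
    have := lt_of_pow_lt_pow_left₀ 2 hB.le (show s ^ 2 < (2 * l2 ^ 2 - α) ^ 2 by linarith)
    linarith
  have hag : 0 < (α - s) / 2 := by linarith
  refine ⟨h0, ?_, ?_, ?_, h2, ?_, ?_⟩
  · exact (Real.lt_sqrt h0.le).mpr (by nlinarith)
  · exact Real.sqrt_lt_sqrt h0.le h_l_lt
  · exact (Real.sqrt_lt' one_pos).mpr (by linarith)
  · exact (Real.lt_sqrt hl1p.le).mpr h_l1_lt
  · exact (Real.sqrt_lt' hl2p).mpr h_lt_l2
end

section
/- Let λ and λ₂ be real numbers with 0 < λ < 1 < λ₂ and λλ₂ > 1. Then the improper integral ∫_0^1 [(λλ₂ − 1)/(2√((1 − λ²)(λ₂² − 1)))] · [(2(λ₂ − λ)s − (1 − λ)(1 + λ₂))/(2(λλ₂ − 1)s + (1 − λ)(1 + λ₂))] · 1/√(s(1 − s)) ds equals (π/2)·((λ₂ − λ)/√((1 − λ²)(λ₂² − 1)) − 1). -/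
open MeasureTheory intervalIntegral Real Set Filter Topology

lemma sqrtweight_bound {s : ℝ} (hs0 : 0 < s) (hs1 : s ≤ 1/2) :
    ‖1 / Real.sqrt (s * (1 - s))‖ ≤ Real.sqrt 2 * s ^ (-(1/2) : ℝ) := by
  have h2 : s / 2 ≤ s * (1 - s) := by nlinarith
  have hpos : 0 < Real.sqrt (s / 2) := Real.sqrt_pos.2 (by linarith)
  have key : (1 : ℝ) / Real.sqrt (s * (1 - s)) ≤ 1 / Real.sqrt (s / 2) :=
    one_div_le_one_div_of_le hpos (Real.sqrt_le_sqrt h2)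
  have hnn : 0 ≤ 1 / Real.sqrt (s * (1 - s)) := by positivity
  rw [Real.norm_of_nonneg hnn]
  refine key.trans_eq ?_
  have hsr : s ^ (-(1/2) : ℝ) = (Real.sqrt s)⁻¹ := by
    rw [Real.rpow_neg hs0.le, Real.sqrt_eq_rpow]
  have hss : 0 < Real.sqrt s := Real.sqrt_pos.2 hs0
  rw [Real.sqrt_div hs0.le, hsr]
  have h2p : (0:ℝ) < Real.sqrt 2 := by positivity
  field_simp

lemma sqrtweight_integrable :
    IntervalIntegrable (fun s : ℝ => 1 / Real.sqrt (s * (1 - s))) volume 0 1 := by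
  have hmeas : ∀ u v : ℝ, AEStronglyMeasurable (fun s : ℝ => 1 / Real.sqrt (s * (1 - s)))
      (volume.restrict (Set.uIoc u v)) := by
    intro u v
    exact (measurable_const.div (Real.continuous_sqrt.measurable.comp
      (measurable_id.mul (measurable_const.sub measurable_id)))).aestronglyMeasurable
  have hrpow : IntervalIntegrable (fun s : ℝ => Real.sqrt 2 * s ^ (-(1/2) : ℝ)) volume 0 (1/2) :=
    (intervalIntegrable_rpow' (by norm_num)).const_mul _
  have h1 : IntervalIntegrable (fun s : ℝ => 1 / Real.sqrt (s * (1 - s))) volume 0 (1/2) := by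
    refine hrpow.mono_fun' (hmeas 0 (1/2)) ?_
    rw [Filter.EventuallyLE, ae_restrict_iff' measurableSet_uIoc]
    refine Eventually.of_forall fun s hs => ?_
    rw [uIoc_of_le (by norm_num)] at hs
    exact sqrtweight_bound hs.1 hs.2
  have h2 : IntervalIntegrable (fun s : ℝ => 1 / Real.sqrt (s * (1 - s))) volume (1/2) 1 := by
    have hrefl : IntervalIntegrable
        (fun s : ℝ => Real.sqrt 2 * (1 - s) ^ (-(1/2) : ℝ)) volume (1/2) 1 := by
      have := hrpow.comp_sub_left 1
      norm_num at this
      exact this.symm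
    refine hrefl.mono_fun' (hmeas (1/2) 1) ?_
    rw [Filter.EventuallyLE, ae_restrict_iff' measurableSet_uIoc]
    refine Eventually.of_forall fun s hs => ?_
    rw [uIoc_of_le (by norm_num)] at hs
    rcases eq_or_lt_of_le hs.2 with h1 | h1
    · subst h1
      simp
    have := sqrtweight_bound (s := 1 - s) (by linarith) (by linarith [hs.1])
    calc ‖1 / Real.sqrt (s * (1 - s))‖ = ‖1 / Real.sqrt ((1-s) * (1 - (1-s)))‖ := by ring_nf
      _ ≤ _ := this
  exact h1.trans h2


lemma general_integral (a b c : ℝ) (hb : 0 < b) (hc : 0 < c) :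
    (∫ s in (0:ℝ)..1, (a * s - b) / (c * s + b) * (1 / Real.sqrt (s * (1 - s))))
      = Real.pi * (a / c) - Real.pi * (b * (a + c) / c) / Real.sqrt (b * (b + c)) := by
  set S := Real.sqrt (b * (b + c)) with hS
  set M := b * (a + c) / c with hM
  have hbc : 0 < b + c := by linarith
  have hSpos : 0 < S := Real.sqrt_pos.2 (by positivity)
  have hS2 : S ^ 2 = b * (b + c) := Real.sq_sqrt (by positivity)
  set F : ℝ → ℝ := fun s => a / c * Real.arcsin (2 * s - 1)
      - 2 * M / S * Real.arctan (Real.sqrt ((b + c) * s / (b * (1 - s)))) with hF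
  have hderiv : ∀ s ∈ Ioo (0:ℝ) 1,
      HasDerivAt F ((a * s - b) / (c * s + b) * (1 / Real.sqrt (s * (1 - s)))) s := by
    intro s hs
    obtain ⟨hs0, hs1⟩ := hs
    have h1s : 0 < 1 - s := by linarith
    have hcsb : 0 < c * s + b := by positivity
    have hbne : b * (1 - s) ≠ 0 := by positivity
    have hhpos : 0 < (b + c) * s / (b * (1 - s)) := by positivity
    have hN : HasDerivAt (fun s : ℝ => (b + c) * s) (b + c) s := by
      simpa using (hasDerivAt_id s).const_mul (b + c)
    have hD : HasDerivAt (fun s : ℝ => b * (1 - s)) (b * (0 - 1)) s := by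
      simpa using ((hasDerivAt_id s).const_sub 1).const_mul b
    have hh : HasDerivAt (fun s : ℝ => (b + c) * s / (b * (1 - s)))
        (((b + c) * (b * (1 - s)) - (b + c) * s * (b * (0 - 1))) / (b * (1 - s)) ^ 2) s :=
      hN.div hD hbne
    have hsq := (Real.hasDerivAt_sqrt hhpos.ne').comp s hh
    have hat := (Real.hasDerivAt_arctan (Real.sqrt ((b + c) * s / (b * (1 - s))))).comp s hsq
    have hasn : HasDerivAt (fun s : ℝ => Real.arcsin (2 * s - 1))
        (1 / Real.sqrt (1 - (2 * s - 1) ^ 2) * 2) s := by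
      have hin : HasDerivAt (fun s : ℝ => 2 * s - 1) 2 s := by
        simpa using ((hasDerivAt_id s).const_mul 2).sub_const 1
      exact (Real.hasDerivAt_arcsin (by intro h; linarith)
        (by intro h; linarith)).comp s hin
    have hFd := (hasn.const_mul (a / c)).sub (hat.const_mul (2 * M / S))
    refine hFd.congr_deriv (Eq.symm ?_)
    -- value computation
    have hw2 : Real.sqrt (s * (1 - s)) ^ 2 = s * (1 - s) := Real.sq_sqrt (by positivity)
    have hwpos : 0 < Real.sqrt (s * (1 - s)) := Real.sqrt_pos.2 (by positivity)
    have e1 : Real.sqrt (1 - (2 * s - 1) ^ 2) = 2 * Real.sqrt (s * (1 - s)) := by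
      rw [show 1 - (2 * s - 1) ^ 2 = 2 ^ 2 * (s * (1 - s)) by ring,
        Real.sqrt_mul (by positivity), Real.sqrt_sq (by norm_num)]
    have e2 : Real.sqrt ((b + c) * s / (b * (1 - s)))
        = S * Real.sqrt (s * (1 - s)) / (b * (1 - s)) := by
      rw [show (b + c) * s / (b * (1 - s))
          = (S * Real.sqrt (s * (1 - s)) / (b * (1 - s))) ^ 2 by
        rw [div_pow, mul_pow, hS2, hw2]; field_simp]
      exact Real.sqrt_sq (by positivity)
    set w := Real.sqrt (s * (1 - s)) with hw
    have e3 : 1 + (S * w / (b * (1 - s))) ^ 2 = (c * s + b) / (b * (1 - s)) := by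
      rw [div_pow, mul_pow, hS2, hw2]; field_simp; ring
    have e4 : (b + c) * (b * (1 - s)) - (b + c) * s * (b * (0 - 1)) = S ^ 2 := by
      rw [hS2]; ring
    rw [Function.comp_def] at *
    simp only [e2, e1, e4, e3]
    rw [hM]
    field_simp
    ring
  have hint : IntervalIntegrable
      (fun s => (a * s - b) / (c * s + b) * (1 / Real.sqrt (s * (1 - s)))) volume 0 1 := by
    refine (sqrtweight_integrable.const_mul ((|a| + b) / b)).mono_fun ?_ ?_
    · apply Measurable.aestronglyMeasurable
      apply Measurable.mul
      · exact (measurable_id.const_mul a |>.sub measurable_const).div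
          (measurable_id.const_mul c |>.add measurable_const)
      · exact measurable_const.div (Real.continuous_sqrt.measurable.comp
          (measurable_id.mul (measurable_const.sub measurable_id)))
    · rw [Filter.EventuallyLE, ae_restrict_iff' measurableSet_uIoc]
      refine Eventually.of_forall fun s hs => ?_
      rw [uIoc_of_le (by norm_num)] at hs
      obtain ⟨hs0, hs1⟩ := hs
      have hcsb : 0 < c * s + b := by positivity
      have hwnn : (0:ℝ) ≤ 1 / Real.sqrt (s * (1 - s)) := by positivity
      rw [norm_mul, Real.norm_of_nonneg hwnn, norm_mul,
        Real.norm_of_nonneg (le_of_lt (by positivity : (0:ℝ) < (|a| + b) / b)),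
        Real.norm_of_nonneg hwnn]
      apply mul_le_mul_of_nonneg_right _ hwnn
      rw [Real.norm_eq_abs, abs_div, abs_of_pos hcsb]
      apply div_le_div₀ (by positivity) _ hb (by nlinarith)
      calc |a * s - b| ≤ |a * s| + |b| := abs_sub _ _
        _ ≤ |a| + b := by
            rw [abs_mul, abs_of_pos hb]
            have : |a| * |s| ≤ |a| * 1 := by
              apply mul_le_mul_of_nonneg_left _ (abs_nonneg a)
              rw [abs_of_pos hs0]; exact hs1
            linarith
  have hlim0 : Tendsto F (nhdsWithin 0 (Ioi 0)) (nhds (a / c * (-(Real.pi/2)) - 2 * M / S * 0)) := by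
    have hg : ContinuousAt (fun s : ℝ => (b + c) * s / (b * (1 - s))) 0 := by
      apply ContinuousAt.div (by fun_prop) (by fun_prop)
      norm_num [hb.ne']
    have hcont : ContinuousAt F 0 := by
      apply ContinuousAt.sub
      · exact (Real.continuous_arcsin.continuousAt.comp (by fun_prop)).const_mul _
      · exact (Real.continuous_arctan.continuousAt.comp
          (Real.continuous_sqrt.continuousAt.comp hg)).const_mul _
    have hval : F 0 = a / c * (-(Real.pi/2)) - 2 * M / S * 0 := by
      simp [hF, Real.arcsin_neg_one]
    exact hval ▸ hcont.tendsto.mono_left nhdsWithin_le_nhds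
  have hlim1 : Tendsto F (nhdsWithin 1 (Iio 1))
      (nhds (a / c * (Real.pi/2) - 2 * M / S * (Real.pi/2))) := by
    have part1 : Tendsto (fun s : ℝ => a / c * Real.arcsin (2 * s - 1)) (nhdsWithin 1 (Iio 1))
        (nhds (a / c * (Real.pi/2))) := by
      have hcont : ContinuousAt (fun s : ℝ => a / c * Real.arcsin (2 * s - 1)) 1 :=
        (Real.continuous_arcsin.continuousAt.comp (by fun_prop)).const_mul _
      have hval : a / c * Real.arcsin (2 * 1 - 1) = a / c * (Real.pi/2) := by
        norm_num [Real.arcsin_one]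
      exact hval ▸ hcont.tendsto.mono_left nhdsWithin_le_nhds
    have hsub : Tendsto (fun s : ℝ => 1 - s) (nhdsWithin 1 (Iio 1)) (nhdsWithin 0 (Ioi 0)) := by
      rw [tendsto_nhdsWithin_iff]
      constructor
      · have h : ContinuousAt (fun s : ℝ => 1 - s) 1 := by fun_prop
        have h0 : (fun s : ℝ => 1 - s) 1 = 0 := by norm_num
        have := h.tendsto.mono_left (nhdsWithin_le_nhds (s := Iio 1))
        norm_num at this
        exact this
      · exact eventually_nhdsWithin_of_forall fun x hx => by
          simp only [mem_Iio] at hx; simp [mem_Ioi]; linarith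
    have hinv : Tendsto (fun s : ℝ => (1 - s)⁻¹) (nhdsWithin 1 (Iio 1)) atTop :=
      tendsto_inv_nhdsGT_zero.comp hsub
    have hnum : Tendsto (fun s : ℝ => (b + c) * s / b) (nhdsWithin 1 (Iio 1))
        (nhds ((b + c) / b)) := by
      have hcont : ContinuousAt (fun s : ℝ => (b + c) * s / b) 1 := by fun_prop
      have : (b + c) * 1 / b = (b + c) / b := by ring
      exact this ▸ hcont.tendsto.mono_left nhdsWithin_le_nhds
    have hh : Tendsto (fun s : ℝ => (b + c) * s / (b * (1 - s))) (nhdsWithin 1 (Iio 1)) atTop := by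
      have := hnum.pos_mul_atTop (by positivity) hinv
      refine this.congr fun s => ?_
      rw [← div_div]
      ring
    have hsqrtTop : Tendsto Real.sqrt atTop atTop := by
      apply Filter.tendsto_atTop_atTop.2
      intro t
      refine ⟨(max 0 t) ^ 2, fun x hx => le_trans (le_max_right 0 t) ?_⟩
      rw [show max 0 t = Real.sqrt ((max 0 t) ^ 2) from (Real.sqrt_sq (le_max_left 0 t)).symm]
      exact Real.sqrt_le_sqrt hx
    have harct : Tendsto (fun s : ℝ => Real.arctan (Real.sqrt ((b + c) * s / (b * (1 - s)))))
        (nhdsWithin 1 (Iio 1)) (nhds (Real.pi/2)) :=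
      (Real.tendsto_arctan_atTop.mono_right nhdsWithin_le_nhds).comp (hsqrtTop.comp hh)
    exact part1.sub (harct.const_mul (2 * M / S))
  have := integral_eq_sub_of_hasDerivAt_of_tendsto (by norm_num : (0:ℝ) < 1)
    hderiv hint hlim0 hlim1
  rw [this]
  field_simp
  ring

theorem stmt_5 (l l2 : ℝ) (h0 : 0 < l) (h1 : l < 1) (h2 : 1 < l2) (h3 : 1 < l * l2) :
    (∫ s in (0 : ℝ)..1,
        (l * l2 - 1) / (2 * Real.sqrt ((1 - l ^ 2) * (l2 ^ 2 - 1))) *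
          ((2 * (l2 - l) * s - (1 - l) * (1 + l2)) /
            (2 * (l * l2 - 1) * s + (1 - l) * (1 + l2))) *
          (1 / Real.sqrt (s * (1 - s)))) =
      Real.pi / 2 * ((l2 - l) / Real.sqrt ((1 - l ^ 2) * (l2 ^ 2 - 1)) - 1) := by
  have hb : (0:ℝ) < (1 - l) * (1 + l2) := by nlinarith
  have hc : (0:ℝ) < 2 * (l * l2 - 1) := by linarith
  have key := general_integral (2 * (l2 - l)) ((1 - l) * (1 + l2)) (2 * (l * l2 - 1)) hb hc
  have hpull : (∫ s in (0 : ℝ)..1,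
        (l * l2 - 1) / (2 * Real.sqrt ((1 - l ^ 2) * (l2 ^ 2 - 1))) *
          ((2 * (l2 - l) * s - (1 - l) * (1 + l2)) /
            (2 * (l * l2 - 1) * s + (1 - l) * (1 + l2))) *
          (1 / Real.sqrt (s * (1 - s))))
      = (l * l2 - 1) / (2 * Real.sqrt ((1 - l ^ 2) * (l2 ^ 2 - 1))) *
        ∫ s in (0 : ℝ)..1, (2 * (l2 - l) * s - (1 - l) * (1 + l2)) /
            (2 * (l * l2 - 1) * s + (1 - l) * (1 + l2)) * (1 / Real.sqrt (s * (1 - s))) := by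
    simp only [mul_assoc]
    exact intervalIntegral.integral_const_mul _ _
  rw [hpull, key]
  have hDpos : (0:ℝ) < (1 - l ^ 2) * (l2 ^ 2 - 1) := by nlinarith
  have hbbc : (1 - l) * (1 + l2) * ((1 - l) * (1 + l2) + 2 * (l * l2 - 1))
      = (1 - l ^ 2) * (l2 ^ 2 - 1) := by ring
  rw [hbbc]
  set sD := Real.sqrt ((1 - l ^ 2) * (l2 ^ 2 - 1)) with hsD
  have hsDpos : 0 < sD := Real.sqrt_pos.2 hDpos
  have hsD2 : sD ^ 2 = (1 - l ^ 2) * (l2 ^ 2 - 1) := Real.sq_sqrt hDpos.le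
  rw [show (1 - l) * (1 + l2) * (2 * (l2 - l) + 2 * (l * l2 - 1)) = 2 * sD ^ 2 by
    rw [hsD2]; ring]
  have hcne : l * l2 - 1 ≠ 0 := by linarith
  field_simp
end

section
/- Fix real numbers λ ∈ (0, 1) and μ > 0, and for λ₁ > 1 define γ(λ₁) = √((λμ + (1 − λ)μλ₁ + (1 − λ)λ₁²)/(1 − λ + μ)). Then 1 < γ(λ₁) < λ₁ for every λ₁ > 1, and as λ₁ → ∞ one has γ(λ₁) → ∞ and γ(λ₁)/λ₁ → √((1 − λ)/(1 − λ + μ)). -/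
open Filter Topology

theorem stmt_10 (l μ : ℝ) (h0 : 0 < l) (h1 : l < 1) (hμ : 0 < μ) :
    (∀ l1 : ℝ, 1 < l1 →
        1 < Real.sqrt ((l * μ + (1 - l) * μ * l1 + (1 - l) * l1 ^ 2) / (1 - l + μ)) ∧
        Real.sqrt ((l * μ + (1 - l) * μ * l1 + (1 - l) * l1 ^ 2) / (1 - l + μ)) < l1) ∧
    Filter.Tendsto
        (fun l1 : ℝ => Real.sqrt ((l * μ + (1 - l) * μ * l1 + (1 - l) * l1 ^ 2) / (1 - l + μ)))
        Filter.atTop Filter.atTop ∧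
    Filter.Tendsto
        (fun l1 : ℝ =>
          Real.sqrt ((l * μ + (1 - l) * μ * l1 + (1 - l) * l1 ^ 2) / (1 - l + μ)) / l1)
        Filter.atTop (nhds (Real.sqrt ((1 - l) / (1 - l + μ)))) := by
  have hd : (0:ℝ) < 1 - l + μ := by linarith
  set c : ℝ := (1 - l) / (1 - l + μ) with hc
  have hc0 : 0 < c := div_pos (by linarith) hd
  refine ⟨?_, ?_, ?_⟩
  · intro l1 hl1
    constructor
    · rw [Real.lt_sqrt (by norm_num), lt_div_iff₀ hd]
      nlinarith [mul_pos hμ (mul_pos (sub_pos.mpr h1) (sub_pos.mpr hl1)),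
        mul_pos (sub_pos.mpr h1) (sub_pos.mpr hl1)]
    · rw [Real.sqrt_lt' (by linarith), div_lt_iff₀ hd]
      nlinarith [mul_pos hμ (mul_pos (sub_pos.mpr hl1) (show (0:ℝ) < l1 + l by linarith))]
  · refine tendsto_atTop_mono' atTop ?_
      (Tendsto.const_mul_atTop (Real.sqrt_pos.mpr hc0) tendsto_id)
    · filter_upwards [eventually_ge_atTop (1:ℝ)] with l1 hl1
      have h0l1 : (0:ℝ) ≤ l1 := by linarith
      simp only [id_eq]
      have : Real.sqrt c * l1 = Real.sqrt (c * l1 ^ 2) := by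
        rw [Real.sqrt_mul hc0.le, Real.sqrt_sq h0l1]
      rw [this]
      apply Real.sqrt_le_sqrt
      have hrw : c * l1 ^ 2 = ((1 - l) * l1 ^ 2) / (1 - l + μ) := by
        rw [hc]; ring
      rw [hrw, div_le_div_iff₀ hd hd]
      nlinarith [mul_nonneg (add_nonneg (mul_nonneg h0.le hμ.le)
        (mul_nonneg (mul_nonneg (by linarith : (0:ℝ) ≤ 1 - l) hμ.le) h0l1)) hd.le]
  · have key : Tendsto (fun l1 : ℝ =>
        (l * μ + (1 - l) * μ * l1 + (1 - l) * l1 ^ 2) / (1 - l + μ) / l1 ^ 2)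
        atTop (nhds c) := by
      have h2 : Tendsto (fun l1 : ℝ =>
          (l * μ * (1 / l1 ^ 2) + (1 - l) * μ * (1 / l1) + (1 - l)) / (1 - l + μ))
          atTop (nhds ((l * μ * 0 + (1 - l) * μ * 0 + (1 - l)) / (1 - l + μ))) := by
        apply Tendsto.div_const
        have hinv : Tendsto (fun l1 : ℝ => 1 / l1) atTop (nhds 0) := by
          simpa using tendsto_inv_atTop_zero
        have hinv2 : Tendsto (fun l1 : ℝ => 1 / l1 ^ 2) atTop (nhds 0) := by
          have := tendsto_inv_atTop_zero.comp (tendsto_pow_atTop (α := ℝ) (n := 2) two_ne_zero)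
          simpa [one_div, Function.comp_def] using this
        exact ((tendsto_const_nhds.mul hinv2).add (tendsto_const_nhds.mul hinv)).add
          tendsto_const_nhds
      have h3 : ((l * μ * 0 + (1 - l) * μ * 0 + (1 - l)) / (1 - l + μ)) = c := by
        rw [hc]; ring
      rw [h3] at h2
      apply h2.congr'
      filter_upwards [eventually_ge_atTop (1:ℝ)] with l1 hl1
      have hl10 : l1 ≠ 0 := by positivity
      field_simp
    have h4 : Tendsto (fun l1 : ℝ =>
        Real.sqrt ((l * μ + (1 - l) * μ * l1 + (1 - l) * l1 ^ 2) / (1 - l + μ) / l1 ^ 2))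
        atTop (nhds (Real.sqrt c)) := (Real.continuous_sqrt.tendsto c).comp key
    apply h4.congr'
    filter_upwards [eventually_ge_atTop (1:ℝ)] with l1 hl1
    have h0l1 : (0:ℝ) < l1 := by linarith
    have hnum : 0 ≤ (l * μ + (1 - l) * μ * l1 + (1 - l) * l1 ^ 2) / (1 - l + μ) := by
      apply div_nonneg _ hd.le
      nlinarith [mul_nonneg (by linarith : (0:ℝ) ≤ 1 - l) (sq_nonneg l1),
        mul_nonneg (mul_nonneg (by linarith : (0:ℝ) ≤ 1 - l) hμ.le) h0l1.le,
        mul_pos h0 hμ]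
    rw [Real.sqrt_div hnum (l1 ^ 2), Real.sqrt_sq h0l1.le]
end

section
/- Fix real numbers λ and λ₂ with 0 < λ < 1 < λ₂ and λλ₂ ≤ 1. Then there exists ε > 0 such that for every λ₁ with 1 < λ₁ < min(1 + ε, λ₂), the improper integral ξ₂(λ₁, λ₂) = ∫_{λ₁}^{λ₂} (t² − b²)/√((t² − λ²)(t² − 1)(t² − λ₁²)(λ₂² − t²)) dt is strictly positive, where b = √((α + √(α² − 4λλ₁λ₂))/2) and α = λ + λ₁ − λ₂ − λλ₁ + λλ₂ + λ₁λ₂. -/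
open MeasureTheory Set intervalIntegral

set_option maxHeartbeats 1000000

private lemma sqrt_add_le3 {a b : ℝ} (ha : 0 ≤ a) (hb : 0 ≤ b) :
    Real.sqrt (a + b) ≤ Real.sqrt a + Real.sqrt b := by
  have h : a + b ≤ (Real.sqrt a + Real.sqrt b) ^ 2 := by
    nlinarith [Real.sq_sqrt ha, Real.sq_sqrt hb, Real.sqrt_nonneg a, Real.sqrt_nonneg b]
  calc Real.sqrt (a + b) ≤ Real.sqrt ((Real.sqrt a + Real.sqrt b) ^ 2) := Real.sqrt_le_sqrt h
    _ = Real.sqrt a + Real.sqrt b := Real.sqrt_sq (by positivity)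

private lemma sqrt16 : Real.sqrt 16 = 4 := by
  rw [show (16 : ℝ) = 4 ^ 2 by norm_num, Real.sqrt_sq (by norm_num : (0:ℝ) ≤ 4)]

/-- Lower bound for the square root of the quartic on the left part of the interval. -/
private lemma denom_lb_left (l l1 l2 t : ℝ) (h0 : 0 < l) (h1 : l < 1) (h2 : 1 < l2)
    (hl1 : 1 < l1) (ht1 : l1 < t) (ht2 : t ≤ (1 + l2) / 2) :
    Real.sqrt (32 * ((l2 - 1) / 4) * (1 - l ^ 2) * Real.sqrt (l1 - 1)) * (t - l1) ^ ((3 : ℝ) / 4)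
      ≤ Real.sqrt ((t ^ 2 - l ^ 2) * (t ^ 2 - 1) * (t ^ 2 - l1 ^ 2) * (l2 ^ 2 - t ^ 2)) := by
  have hA1 : 0 < 1 - l ^ 2 := by nlinarith
  have hδ : 0 < l1 - 1 := by linarith
  have hu : 0 < t - l1 := by linarith
  have ht1' : 1 < t := lt_trans hl1 ht1
  have f1 : 1 - l ^ 2 ≤ t ^ 2 - l ^ 2 := by nlinarith
  have f3 : 2 * (t - l1) ≤ t ^ 2 - l1 ^ 2 := by nlinarith
  have f4 : 4 * ((l2 - 1) / 4) ≤ l2 ^ 2 - t ^ 2 := by nlinarith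
  have f2 : 4 * Real.sqrt ((l1 - 1) * (t - l1)) ≤ t ^ 2 - 1 := by
    have fB : 2 * (l1 - 1) ≤ l1 ^ 2 - 1 := by nlinarith
    have hY : (0 : ℝ) ≤ t ^ 2 - 1 := by nlinarith
    have hprod : (2 * (t - l1)) * (2 * (l1 - 1)) ≤ (t ^ 2 - l1 ^ 2) * (l1 ^ 2 - 1) :=
      mul_le_mul f3 fB (by linarith) (by nlinarith)
    have hXY : 16 * ((l1 - 1) * (t - l1)) ≤ (t ^ 2 - 1) ^ 2 := by
      nlinarith [sq_nonneg ((t ^ 2 - l1 ^ 2) - (l1 ^ 2 - 1))]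
    have h := Real.sqrt_le_sqrt hXY
    rw [Real.sqrt_sq hY, Real.sqrt_mul (by norm_num : (0:ℝ) ≤ 16), sqrt16] at h
    linarith
  have hsnn : 0 ≤ Real.sqrt ((l1 - 1) * (t - l1)) := Real.sqrt_nonneg _
  have hge : 32 * ((l2 - 1) / 4) * (1 - l ^ 2) * Real.sqrt (l1 - 1) *
        ((t - l1) * Real.sqrt (t - l1))
      ≤ (t ^ 2 - l ^ 2) * (t ^ 2 - 1) * (t ^ 2 - l1 ^ 2) * (l2 ^ 2 - t ^ 2) := by
    have e1 : Real.sqrt ((l1 - 1) * (t - l1)) = Real.sqrt (l1 - 1) * Real.sqrt (t - l1) :=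
      Real.sqrt_mul hδ.le _
    have step1 : (1 - l ^ 2) * (4 * Real.sqrt ((l1 - 1) * (t - l1)))
        ≤ (t ^ 2 - l ^ 2) * (t ^ 2 - 1) :=
      mul_le_mul f1 f2 (by linarith) (by linarith)
    have g1 : (0:ℝ) ≤ t ^ 2 - l ^ 2 := by linarith
    have g2 : (0:ℝ) ≤ t ^ 2 - 1 := by linarith
    have g3 : (0:ℝ) ≤ t ^ 2 - l1 ^ 2 := by linarith
    have step2 : (1 - l ^ 2) * (4 * Real.sqrt ((l1 - 1) * (t - l1))) * (2 * (t - l1))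
        ≤ (t ^ 2 - l ^ 2) * (t ^ 2 - 1) * (t ^ 2 - l1 ^ 2) :=
      mul_le_mul step1 f3 (by linarith) (mul_nonneg g1 g2)
    have step3 : (1 - l ^ 2) * (4 * Real.sqrt ((l1 - 1) * (t - l1))) * (2 * (t - l1))
          * (4 * ((l2 - 1) / 4))
        ≤ (t ^ 2 - l ^ 2) * (t ^ 2 - 1) * (t ^ 2 - l1 ^ 2) * (l2 ^ 2 - t ^ 2) :=
      mul_le_mul step2 f4 (by linarith) (mul_nonneg (mul_nonneg g1 g2) g3)
    calc 32 * ((l2 - 1) / 4) * (1 - l ^ 2) * Real.sqrt (l1 - 1) *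
          ((t - l1) * Real.sqrt (t - l1))
        = (1 - l ^ 2) * (4 * Real.sqrt ((l1 - 1) * (t - l1))) * (2 * (t - l1))
            * (4 * ((l2 - 1) / 4)) := by rw [e1]; ring
      _ ≤ _ := step3
  have hC0 : (0 : ℝ) ≤ 32 * ((l2 - 1) / 4) * (1 - l ^ 2) * Real.sqrt (l1 - 1) := by
    have : (0:ℝ) ≤ 32 * ((l2 - 1) / 4) * (1 - l ^ 2) := by nlinarith
    exact mul_nonneg this (Real.sqrt_nonneg _)
  have hgnn : 0 ≤ (t ^ 2 - l ^ 2) * (t ^ 2 - 1) * (t ^ 2 - l1 ^ 2) * (l2 ^ 2 - t ^ 2) :=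
    le_trans (mul_nonneg hC0 (mul_nonneg hu.le (Real.sqrt_nonneg _))) hge
  have hLnn : 0 ≤ Real.sqrt (32 * ((l2 - 1) / 4) * (1 - l ^ 2) * Real.sqrt (l1 - 1)) *
      (t - l1) ^ ((3 : ℝ) / 4) := by positivity
  rw [Real.le_sqrt hLnn hgnn]
  have hpow : ((t - l1) ^ ((3 : ℝ) / 4)) ^ 2 = (t - l1) * Real.sqrt (t - l1) := by
    rw [← Real.rpow_natCast ((t - l1) ^ ((3 : ℝ) / 4)) 2, ← Real.rpow_mul hu.le]
    rw [show ((3 : ℝ) / 4 * (2 : ℕ)) = 1 + 1 / 2 by push_cast; norm_num]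
    rw [Real.rpow_add hu, Real.rpow_one, Real.sqrt_eq_rpow]
  rw [mul_pow, Real.sq_sqrt hC0, hpow]
  exact hge

/-- Lower bound for the square root of the quartic on the right part of the interval. -/
private lemma denom_lb_right (l l1 l2 t : ℝ) (h0 : 0 < l) (h1 : l < 1) (h2 : 1 < l2)
    (hl1 : 1 < l1) (hl1e : l1 ≤ 1 + (l2 - 1) / 4) (ht1 : (1 + l2) / 2 ≤ t) (ht2 : t ≤ l2) :
    4 * ((l2 - 1) / 4) * Real.sqrt (1 - l ^ 2) * Real.sqrt (l2 - t)
      ≤ Real.sqrt ((t ^ 2 - l ^ 2) * (t ^ 2 - 1) * (t ^ 2 - l1 ^ 2) * (l2 ^ 2 - t ^ 2)) := by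
  have hA1 : 0 < 1 - l ^ 2 := by nlinarith
  have ht1' : 1 < t := by linarith
  have f1 : 1 - l ^ 2 ≤ t ^ 2 - l ^ 2 := by nlinarith
  have f2 : 4 * ((l2 - 1) / 4) ≤ t ^ 2 - 1 := by nlinarith
  have f3 : 2 * ((l2 - 1) / 4) ≤ t ^ 2 - l1 ^ 2 := by nlinarith
  have f4 : 2 * (l2 - t) ≤ l2 ^ 2 - t ^ 2 := by nlinarith
  have hge : (1 - l ^ 2) * (4 * ((l2 - 1) / 4)) * (2 * ((l2 - 1) / 4)) * (2 * (l2 - t))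
      ≤ (t ^ 2 - l ^ 2) * (t ^ 2 - 1) * (t ^ 2 - l1 ^ 2) * (l2 ^ 2 - t ^ 2) := by
    have step1 : (1 - l ^ 2) * (4 * ((l2 - 1) / 4)) ≤ (t ^ 2 - l ^ 2) * (t ^ 2 - 1) :=
      mul_le_mul f1 f2 (by linarith) (by linarith)
    have g1 : (0:ℝ) ≤ t ^ 2 - l ^ 2 := by linarith
    have g2 : (0:ℝ) ≤ t ^ 2 - 1 := by linarith
    have g3 : (0:ℝ) ≤ t ^ 2 - l1 ^ 2 := by linarith
    have step2 : (1 - l ^ 2) * (4 * ((l2 - 1) / 4)) * (2 * ((l2 - 1) / 4))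
        ≤ (t ^ 2 - l ^ 2) * (t ^ 2 - 1) * (t ^ 2 - l1 ^ 2) :=
      mul_le_mul step1 f3 (by linarith) (mul_nonneg g1 g2)
    exact mul_le_mul step2 f4 (by linarith) (mul_nonneg (mul_nonneg g1 g2) g3)
  have hC0 : (0 : ℝ) ≤ (1 - l ^ 2) * (4 * ((l2 - 1) / 4)) * (2 * ((l2 - 1) / 4)) :=
    mul_nonneg (mul_nonneg hA1.le (by linarith)) (by linarith)
  have hgnn : 0 ≤ (t ^ 2 - l ^ 2) * (t ^ 2 - 1) * (t ^ 2 - l1 ^ 2) * (l2 ^ 2 - t ^ 2) :=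
    le_trans (mul_nonneg hC0 (by linarith)) hge
  have hLnn : 0 ≤ 4 * ((l2 - 1) / 4) * Real.sqrt (1 - l ^ 2) * Real.sqrt (l2 - t) := by
    have : (0:ℝ) ≤ 4 * ((l2 - 1) / 4) := by linarith
    exact mul_nonneg (mul_nonneg this (Real.sqrt_nonneg _)) (Real.sqrt_nonneg _)
  rw [Real.le_sqrt hLnn hgnn]
  have hsq : (4 * ((l2 - 1) / 4) * Real.sqrt (1 - l ^ 2) * Real.sqrt (l2 - t)) ^ 2
      = (1 - l ^ 2) * (4 * ((l2 - 1) / 4)) * (2 * ((l2 - 1) / 4)) * (2 * (l2 - t)) := by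
    rw [mul_pow, mul_pow, Real.sq_sqrt hA1.le, Real.sq_sqrt (by linarith : (0:ℝ) ≤ l2 - t)]
    ring
  rw [hsq]
  exact hge

/-- Pointwise lower bound for the positive part integrand on the middle interval. -/
private lemma p_mid_lb (l l1 l2 t : ℝ) (h0 : 0 < l) (h1 : l < 1) (h2 : 1 < l2)
    (hl1 : 1 < l1) (hl1e : l1 ≤ 1 + (l2 - 1) / 4)
    (ht1 : (1 + l2) / 2 ≤ t) (ht2 : t ≤ (1 + l2) / 2 + (l2 - 1) / 4) :
    2 * ((l2 - 1) / 4) / l2 ^ 4 ≤ (t ^ 2 - l1 ^ 2) *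
      (Real.sqrt ((t ^ 2 - l ^ 2) * (t ^ 2 - 1) * (t ^ 2 - l1 ^ 2) * (l2 ^ 2 - t ^ 2)))⁻¹ := by
  have hA1 : 0 < 1 - l ^ 2 := by nlinarith
  have ht1' : 1 < t := by linarith
  have ht0 : (0:ℝ) ≤ t := by linarith
  have htl2 : t < l2 := by linarith
  have hsq1 : ((1 + l2) / 2) ^ 2 ≤ t ^ 2 := pow_le_pow_left₀ (by linarith) ht1 2
  have hsq2 : l1 ^ 2 ≤ (1 + (l2 - 1) / 4) ^ 2 := pow_le_pow_left₀ (by linarith) hl1e 2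
  have hsq3 : t ^ 2 ≤ l2 ^ 2 := pow_le_pow_left₀ ht0 htl2.le 2
  have hsq5 : 1 < t ^ 2 := by
    have h := pow_lt_pow_left₀ ht1' (by norm_num : (0:ℝ) ≤ 1) (by norm_num : 2 ≠ 0)
    rwa [one_pow] at h
  have hsq6 : t ^ 2 < l2 ^ 2 := pow_lt_pow_left₀ htl2 ht0 (by norm_num : 2 ≠ 0)
  have hl2lt : l ^ 2 < 1 := by nlinarith
  have p1 : 0 < t ^ 2 - l ^ 2 := by linarith
  have p2 : 0 < t ^ 2 - 1 := by linarith
  have p3 : 2 * ((l2 - 1) / 4) ≤ t ^ 2 - l1 ^ 2 := by nlinarith [sq_nonneg (l2 - 1)]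
  have p3' : 0 < t ^ 2 - l1 ^ 2 := by nlinarith [sq_nonneg (l2 - 1)]
  have p4 : 0 < l2 ^ 2 - t ^ 2 := by linarith
  have u1 : t ^ 2 - l ^ 2 ≤ l2 ^ 2 := by linarith [sq_nonneg l]
  have u2 : t ^ 2 - 1 ≤ l2 ^ 2 := by linarith
  have u3 : t ^ 2 - l1 ^ 2 ≤ l2 ^ 2 := by linarith [sq_nonneg l1]
  have u4 : l2 ^ 2 - t ^ 2 ≤ l2 ^ 2 := by linarith [sq_nonneg t]
  have hl2sq : (0:ℝ) < l2 ^ 2 := by linarith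
  have hgU : (t ^ 2 - l ^ 2) * (t ^ 2 - 1) * (t ^ 2 - l1 ^ 2) * (l2 ^ 2 - t ^ 2)
      ≤ (l2 ^ 4) ^ 2 := by
    have s1 : (t ^ 2 - l ^ 2) * (t ^ 2 - 1) ≤ l2 ^ 2 * l2 ^ 2 :=
      mul_le_mul u1 u2 p2.le (by positivity)
    have s2 : (t ^ 2 - l ^ 2) * (t ^ 2 - 1) * (t ^ 2 - l1 ^ 2) ≤ l2 ^ 2 * l2 ^ 2 * l2 ^ 2 :=
      mul_le_mul s1 u3 p3'.le (by positivity)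
    have s3 : (t ^ 2 - l ^ 2) * (t ^ 2 - 1) * (t ^ 2 - l1 ^ 2) * (l2 ^ 2 - t ^ 2)
        ≤ l2 ^ 2 * l2 ^ 2 * l2 ^ 2 * l2 ^ 2 :=
      mul_le_mul s2 u4 p4.le (by positivity)
    calc (t ^ 2 - l ^ 2) * (t ^ 2 - 1) * (t ^ 2 - l1 ^ 2) * (l2 ^ 2 - t ^ 2)
        ≤ l2 ^ 2 * l2 ^ 2 * l2 ^ 2 * l2 ^ 2 := s3
      _ = (l2 ^ 4) ^ 2 := by ring
  have hgpos : 0 < (t ^ 2 - l ^ 2) * (t ^ 2 - 1) * (t ^ 2 - l1 ^ 2) * (l2 ^ 2 - t ^ 2) := by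
    exact mul_pos (mul_pos (mul_pos p1 p2) p3') p4
  have hsle : Real.sqrt ((t ^ 2 - l ^ 2) * (t ^ 2 - 1) * (t ^ 2 - l1 ^ 2) * (l2 ^ 2 - t ^ 2))
      ≤ l2 ^ 4 := by
    calc Real.sqrt ((t ^ 2 - l ^ 2) * (t ^ 2 - 1) * (t ^ 2 - l1 ^ 2) * (l2 ^ 2 - t ^ 2))
        ≤ Real.sqrt ((l2 ^ 4) ^ 2) := Real.sqrt_le_sqrt hgU
      _ = l2 ^ 4 := Real.sqrt_sq (by positivity)
  have hsgpos : 0 < Real.sqrt ((t ^ 2 - l ^ 2) * (t ^ 2 - 1) * (t ^ 2 - l1 ^ 2) * (l2 ^ 2 - t ^ 2)) :=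
    Real.sqrt_pos.2 hgpos
  rw [← div_eq_mul_inv, div_le_div_iff₀ (by positivity) hsgpos]
  linarith [mul_le_mul_of_nonneg_left hsle (by linarith : (0:ℝ) ≤ 2 * ((l2 - 1) / 4)),
    mul_le_mul_of_nonneg_right p3 (by positivity : (0:ℝ) ≤ l2 ^ 4)]

/-- Algebraic bound: `B - l1 ^ 2 ≤ K * sqrt (l1 - 1)`. -/
private lemma Bdiff_le (l l1 l2 : ℝ) (h0 : 0 < l) (h1 : l < 1) (h2 : 1 < l2) (h3 : l * l2 ≤ 1)
    (hl1 : 1 < l1) (hδ1 : l1 - 1 ≤ 1) :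
    (l + l1 - l2 - l * l1 + l * l2 + l1 * l2 +
        Real.sqrt ((l + l1 - l2 - l * l1 + l * l2 + l1 * l2) ^ 2 - 4 * l * l1 * l2)) / 2 - l1 ^ 2
      ≤ ((l2 - 1) + Real.sqrt (2 * ((1 + l * l2) * (1 - l + l2) - 2 * l * l2)) / 2) *
          Real.sqrt (l1 - 1) := by
  have hδ : 0 < l1 - 1 := by linarith
  have hc2 : 0 < (1 + l * l2) * (1 - l + l2) - 2 * l * l2 := by
    nlinarith [mul_pos (sub_pos.2 h1) (lt_trans one_pos h2),
      mul_pos (mul_pos h0 (lt_trans one_pos h2)) (sub_pos.2 (lt_trans h1 h2))]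
  have hquad : (l + l1 - l2 - l * l1 + l * l2 + l1 * l2) ^ 2 - 4 * l * l1 * l2
      = ((1 - l * l2) ^ 2 + 2 * ((1 + l * l2) * (1 - l + l2) - 2 * l * l2) * (l1 - 1))
          + ((1 - l + l2) * (l1 - 1)) ^ 2 := by ring
  have hs1 : Real.sqrt ((l + l1 - l2 - l * l1 + l * l2 + l1 * l2) ^ 2 - 4 * l * l1 * l2)
      ≤ (1 - l * l2) + Real.sqrt (2 * ((1 + l * l2) * (1 - l + l2) - 2 * l * l2)) *
          Real.sqrt (l1 - 1) + (1 - l + l2) * (l1 - 1) := by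
    rw [hquad]
    have hy : (0:ℝ) ≤ 2 * ((1 + l * l2) * (1 - l + l2) - 2 * l * l2) * (l1 - 1) := by
      nlinarith
    have ha := sqrt_add_le3 (add_nonneg (sq_nonneg (1 - l * l2)) hy) (sq_nonneg ((1 - l + l2) * (l1 - 1)))
    have hb := sqrt_add_le3 (sq_nonneg (1 - l * l2)) hy
    rw [Real.sqrt_sq (by linarith : (0:ℝ) ≤ 1 - l * l2)] at hb
    have hc : Real.sqrt (2 * ((1 + l * l2) * (1 - l + l2) - 2 * l * l2) * (l1 - 1))
        = Real.sqrt (2 * ((1 + l * l2) * (1 - l + l2) - 2 * l * l2)) * Real.sqrt (l1 - 1) :=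
      Real.sqrt_mul (by nlinarith) _
    have hd : Real.sqrt (((1 - l + l2) * (l1 - 1)) ^ 2) = (1 - l + l2) * (l1 - 1) :=
      Real.sqrt_sq (by nlinarith)
    rw [hc] at hb
    rw [hd] at ha
    linarith
  have hδs : l1 - 1 ≤ Real.sqrt (l1 - 1) := by
    rw [Real.le_sqrt hδ.le hδ.le]
    nlinarith
  nlinarith [hs1, hδs, mul_nonneg h0.le hδ.le, sq_nonneg (l1 - 1),
    mul_nonneg (by linarith : (0:ℝ) ≤ l2 - 1)
      (by linarith : (0:ℝ) ≤ Real.sqrt (l1 - 1) - (l1 - 1)),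
    Real.sqrt_nonneg (2 * ((1 + l * l2) * (1 - l + l2) - 2 * l * l2))]

private lemma int_rpow_left (a b : ℝ) (hab : a ≤ b) :
    (∫ t in a..b, (t - a) ^ (-((3 : ℝ) / 4))) = 4 * (b - a) ^ ((1 : ℝ) / 4) := by
  have h := intervalIntegral.integral_comp_sub_right (a := a) (b := b)
    (fun x => x ^ (-((3 : ℝ) / 4))) a
  rw [sub_self] at h
  rw [h, integral_rpow (Or.inl (by norm_num))]
  rw [Real.zero_rpow (by norm_num)]
  norm_num
  ring

private lemma int_rpow_right (a b : ℝ) (hab : a ≤ b) :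
    (∫ t in a..b, (b - t) ^ (-((1 : ℝ) / 2))) = 2 * (b - a) ^ ((1 : ℝ) / 2) := by
  have h := intervalIntegral.integral_comp_sub_left (a := a) (b := b)
    (fun x => x ^ (-((1 : ℝ) / 2))) b
  rw [sub_self] at h
  rw [h, integral_rpow (Or.inl (by norm_num))]
  rw [Real.zero_rpow (by norm_num)]
  norm_num
  ring

set_option maxHeartbeats 1000000 in
theorem stmt_11 (l l2 : ℝ) (h0 : 0 < l) (h1 : l < 1) (h2 : 1 < l2) (h3 : l * l2 ≤ 1) :
    ∃ ε > (0 : ℝ), ∀ l1 : ℝ, 1 < l1 → l1 < min (1 + ε) l2 →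
      0 < ∫ t in l1..l2,
          (t ^ 2 -
              (l + l1 - l2 - l * l1 + l * l2 + l1 * l2 +
                  Real.sqrt ((l + l1 - l2 - l * l1 + l * l2 + l1 * l2) ^ 2 - 4 * l * l1 * l2)) /
                2) /
            Real.sqrt ((t ^ 2 - l ^ 2) * (t ^ 2 - 1) * (t ^ 2 - l1 ^ 2) * (l2 ^ 2 - t ^ 2)) := by
  have hA1 : 0 < 1 - l ^ 2 := by nlinarith
  set e0 : ℝ := (l2 - 1) / 4 with he0d
  have he0 : 0 < e0 := by rw [he0d]; linarith
  set m : ℝ := (1 + l2) / 2 with hmd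
  have hm1 : 1 < m := by rw [hmd]; linarith
  have hme : l2 - m = 2 * e0 := by rw [hmd, he0d]; ring
  have hm2 : m = 1 + 2 * e0 := by rw [hmd, he0d]; ring
  set c2 : ℝ := (1 + l * l2) * (1 - l + l2) - 2 * l * l2 with hc2d
  have hc2 : 0 < c2 := by
    rw [hc2d]
    nlinarith [mul_pos (sub_pos.2 h1) (lt_trans one_pos h2),
      mul_pos (mul_pos h0 (lt_trans one_pos h2)) (sub_pos.2 (lt_trans h1 h2))]
  set K : ℝ := (l2 - 1) + Real.sqrt (2 * c2) / 2 with hKd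
  have hK : 0 < K := by rw [hKd]; have := Real.sqrt_nonneg (2 * c2); linarith
  set CR : ℝ := (4 * e0 * Real.sqrt (1 - l ^ 2))⁻¹ with hCRd
  have hsA1 : 0 < Real.sqrt (1 - l ^ 2) := Real.sqrt_pos.2 hA1
  have hCR : 0 < CR := by rw [hCRd]; positivity
  set cLI : ℝ := 4 * (2 * e0) ^ ((1 : ℝ) / 4) with hcLId
  have hcLI : 0 < cLI := by rw [hcLId]; positivity
  have hA32 : 0 < Real.sqrt (32 * e0 * (1 - l ^ 2)) := Real.sqrt_pos.2 (by positivity)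
  set c5 : ℝ := K * cLI / Real.sqrt (32 * e0 * (1 - l ^ 2)) with hc5d
  have hc5 : 0 < c5 := by rw [hc5d]; positivity
  set c6 : ℝ := K * (CR * (2 * Real.sqrt (2 * e0))) with hc6d
  have hc6 : 0 < c6 := by rw [hc6d]; positivity
  set P : ℝ := e0 * (2 * e0 / l2 ^ 4) with hPd
  have hl2p : (0 : ℝ) < l2 ^ 4 := by positivity
  have hP : 0 < P := by rw [hPd]; positivity
  have hcc : 0 < c5 + c6 + 1 := by linarith
  refine ⟨min e0 (min 1 ((P / (c5 + c6 + 1)) ^ 4)), by positivity, ?_⟩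
  intro l1 hl1 hl1'
  have hl1l2 : l1 < l2 := (lt_min_iff.1 hl1').2
  have hl1e : l1 < 1 + min e0 (min 1 ((P / (c5 + c6 + 1)) ^ 4)) := (lt_min_iff.1 hl1').1
  have hδ : 0 < l1 - 1 := by linarith
  have hδe0 : l1 - 1 < e0 := by
    have := min_le_left e0 (min 1 ((P / (c5 + c6 + 1)) ^ 4)); linarith
  have hδ1 : l1 - 1 < 1 := by
    have h := min_le_right e0 (min 1 ((P / (c5 + c6 + 1)) ^ 4))
    have h' := min_le_left (1 : ℝ) ((P / (c5 + c6 + 1)) ^ 4); linarith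
  have hδP : l1 - 1 < (P / (c5 + c6 + 1)) ^ 4 := by
    have h := min_le_right e0 (min 1 ((P / (c5 + c6 + 1)) ^ 4))
    have h' := min_le_right (1 : ℝ) ((P / (c5 + c6 + 1)) ^ 4); linarith
  have hl1m : l1 < m := by rw [hm2]; linarith
  have hml2 : m < l2 := by linarith
  have hmel2 : m + e0 < l2 := by linarith
  have hl10 : 0 < l1 := by linarith
  have hδsqrtpos : 0 < Real.sqrt (l1 - 1) := Real.sqrt_pos.2 hδ
  -- abbreviations
  set B : ℝ := (l + l1 - l2 - l * l1 + l * l2 + l1 * l2 +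
      Real.sqrt ((l + l1 - l2 - l * l1 + l * l2 + l1 * l2) ^ 2 - 4 * l * l1 * l2)) / 2 with hBd
  set q : ℝ → ℝ := fun t =>
    (Real.sqrt ((t ^ 2 - l ^ 2) * (t ^ 2 - 1) * (t ^ 2 - l1 ^ 2) * (l2 ^ 2 - t ^ 2)))⁻¹ with hqd
  set p : ℝ → ℝ := fun t => (t ^ 2 - l1 ^ 2) * q t with hpd
  have hqnn : ∀ t, 0 ≤ q t := fun t => by rw [hqd]; positivity
  have hcontg : Continuous fun t : ℝ =>
      Real.sqrt ((t ^ 2 - l ^ 2) * (t ^ 2 - 1) * (t ^ 2 - l1 ^ 2) * (l2 ^ 2 - t ^ 2)) := by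
    fun_prop
  have hqmeas : Measurable q := by rw [hqd]; exact hcontg.measurable.inv
  have hpmeas : Measurable p := by
    rw [hpd]
    exact ((continuous_pow 2).sub continuous_const).measurable.mul hqmeas
  -- rewrite integrand
  have hfsplit : ∀ t : ℝ,
      (t ^ 2 - B) / Real.sqrt ((t ^ 2 - l ^ 2) * (t ^ 2 - 1) * (t ^ 2 - l1 ^ 2) * (l2 ^ 2 - t ^ 2))
        = p t - (B - l1 ^ 2) * q t := by
    intro t; simp only [hpd, hqd]; rw [div_eq_mul_inv]; ring
  have hIeq : (∫ t in l1..l2,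
      (t ^ 2 - B) / Real.sqrt ((t ^ 2 - l ^ 2) * (t ^ 2 - 1) * (t ^ 2 - l1 ^ 2) * (l2 ^ 2 - t ^ 2)))
      = ∫ t in l1..l2, (p t - (B - l1 ^ 2) * q t) :=
    intervalIntegral.integral_congr fun t _ => hfsplit t
  -- pointwise bounds on q
  have hq_bound1 : ∀ t ∈ Icc l1 m, q t ≤
      (Real.sqrt (32 * e0 * (1 - l ^ 2) * Real.sqrt (l1 - 1)))⁻¹ *
        (t - l1) ^ (-((3 : ℝ) / 4)) := by
    intro t ht
    rcases eq_or_lt_of_le ht.1 with h | h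
    · rw [hqd]
      simp only []
      rw [← h]
      have hg0 : ((l1:ℝ) ^ 2 - l ^ 2) * (l1 ^ 2 - 1) * (l1 ^ 2 - l1 ^ 2) * (l2 ^ 2 - l1 ^ 2) = 0 := by
        ring
      rw [hg0, Real.sqrt_zero, inv_zero, sub_self,
        Real.zero_rpow (by norm_num : -((3:ℝ)/4) ≠ 0), mul_zero]
    · have hd := denom_lb_left l l1 l2 t h0 h1 h2 hl1 h (by rw [← hmd]; exact ht.2)
      have hupos : 0 < t - l1 := by linarith only [h]
      have hLpos : 0 < Real.sqrt (32 * ((l2 - 1) / 4) * (1 - l ^ 2) * Real.sqrt (l1 - 1)) *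
          (t - l1) ^ ((3 : ℝ) / 4) := by
        refine mul_pos (Real.sqrt_pos.2 ?_) (Real.rpow_pos_of_pos hupos _)
        have : (0:ℝ) < 32 * ((l2 - 1) / 4) * (1 - l ^ 2) :=
          mul_pos (by linarith only [h2]) hA1
        exact mul_pos this hδsqrtpos
      have hinv := inv_anti₀ hLpos hd
      rw [hqd]
      simp only []
      rw [he0d, Real.rpow_neg hupos.le, ← mul_inv]
      exact hinv
  have hq_bound2 : ∀ t ∈ Icc m l2, q t ≤ CR * (l2 - t) ^ (-((1 : ℝ) / 2)) := by
    intro t ht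
    rcases eq_or_lt_of_le ht.2 with h | h
    · rw [hqd]
      simp only []
      rw [h]
      have hg0 : ((l2:ℝ) ^ 2 - l ^ 2) * (l2 ^ 2 - 1) * (l2 ^ 2 - l1 ^ 2) * (l2 ^ 2 - l2 ^ 2) = 0 := by
        ring
      rw [hg0, Real.sqrt_zero, inv_zero, sub_self,
        Real.zero_rpow (by norm_num : -((1:ℝ)/2) ≠ 0), mul_zero]
    · have hd := denom_lb_right l l1 l2 t h0 h1 h2 hl1
        (by rw [← he0d]; linarith only [hδe0]) (by rw [← hmd]; exact ht.1) h.le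
      have hupos : 0 < l2 - t := by linarith only [h]
      have hLpos : 0 < 4 * ((l2 - 1) / 4) * Real.sqrt (1 - l ^ 2) * Real.sqrt (l2 - t) := by
        have h4 : (0:ℝ) < 4 * ((l2 - 1) / 4) := by linarith only [h2]
        exact mul_pos (mul_pos h4 hsA1) (Real.sqrt_pos.2 hupos)
      have hinv := inv_anti₀ hLpos hd
      rw [hqd]
      simp only []
      rw [hCRd, he0d, Real.rpow_neg hupos.le, ← Real.sqrt_eq_rpow, ← mul_inv]
      exact hinv
  -- integrability
  have hD1 : IntervalIntegrable (fun t => (t - l1) ^ (-((3 : ℝ) / 4))) volume l1 m := by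
    have h := (intervalIntegral.intervalIntegrable_rpow' (a := 0) (b := m - l1)
      (r := -((3 : ℝ) / 4)) (by norm_num)).comp_sub_right l1
    simpa using h
  have hD2 : IntervalIntegrable (fun t => (l2 - t) ^ (-((1 : ℝ) / 2))) volume m l2 := by
    have h := (intervalIntegral.intervalIntegrable_rpow' (a := 0) (b := l2 - m)
      (r := -((1 : ℝ) / 2)) (by norm_num)).comp_sub_left l2
    simpa using h.symm
  have hq_int1 : IntervalIntegrable q volume l1 m := by
    rw [intervalIntegrable_iff_integrableOn_Ioc_of_le hl1m.le]
    refine Integrable.mono'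
      (g := fun t => (Real.sqrt (32 * e0 * (1 - l ^ 2) * Real.sqrt (l1 - 1)))⁻¹ *
        (t - l1) ^ (-((3 : ℝ) / 4)))
      ((intervalIntegrable_iff_integrableOn_Ioc_of_le hl1m.le).1 (hD1.const_mul _))
      (hqmeas.aestronglyMeasurable.restrict) ?_
    refine (ae_restrict_iff' measurableSet_Ioc).2 (Filter.Eventually.of_forall fun t ht => ?_)
    rw [Real.norm_eq_abs, abs_of_nonneg (hqnn t)]
    exact hq_bound1 t ⟨ht.1.le, ht.2⟩
  have hq_int2 : IntervalIntegrable q volume m l2 := by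
    rw [intervalIntegrable_iff_integrableOn_Ioc_of_le hml2.le]
    refine Integrable.mono' (g := fun t => CR * (l2 - t) ^ (-((1 : ℝ) / 2)))
      ((intervalIntegrable_iff_integrableOn_Ioc_of_le hml2.le).1 (hD2.const_mul _))
      (hqmeas.aestronglyMeasurable.restrict) ?_
    refine (ae_restrict_iff' measurableSet_Ioc).2 (Filter.Eventually.of_forall fun t ht => ?_)
    rw [Real.norm_eq_abs, abs_of_nonneg (hqnn t)]
    exact hq_bound2 t ⟨ht.1.le, ht.2⟩
  have hq_int : IntervalIntegrable q volume l1 l2 := hq_int1.trans hq_int2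
  have hp_int : IntervalIntegrable p volume l1 l2 := by
    rw [intervalIntegrable_iff_integrableOn_Ioc_of_le hl1l2.le]
    refine Integrable.mono' (g := fun t => l2 ^ 2 * q t)
      ((intervalIntegrable_iff_integrableOn_Ioc_of_le hl1l2.le).1 (hq_int.const_mul _))
      (hpmeas.aestronglyMeasurable.restrict) ?_
    refine (ae_restrict_iff' measurableSet_Ioc).2 (Filter.Eventually.of_forall fun t ht => ?_)
    have ht0 : 0 ≤ t := by linarith only [ht.1, hl10]
    have h01 : l1 ^ 2 ≤ t ^ 2 := pow_le_pow_left₀ hl10.le ht.1.le 2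
    have h02 : t ^ 2 ≤ l2 ^ 2 := pow_le_pow_left₀ ht0 ht.2 2
    simp only [hpd]
    rw [Real.norm_eq_abs, abs_mul, abs_of_nonneg (hqnn t),
      abs_of_nonneg (by linarith only [h01] : (0:ℝ) ≤ t ^ 2 - l1 ^ 2)]
    refine mul_le_mul_of_nonneg_right ?_ (hqnn t)
    linarith only [h02, sq_nonneg l1]
  -- p is nonneg on [l1, l2]
  have hp_nonneg : ∀ t ∈ Icc l1 l2, 0 ≤ p t := by
    intro t ht
    have h01 : l1 ^ 2 ≤ t ^ 2 := pow_le_pow_left₀ hl10.le ht.1 2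
    simp only [hpd]
    exact mul_nonneg (by linarith only [h01]) (hqnn t)
  -- split of ∫ p and lower bound
  have hp1 : IntervalIntegrable p volume l1 m := by
    apply hp_int.mono_set
    rw [Set.uIcc_of_le hl1m.le, Set.uIcc_of_le hl1l2.le]
    exact Set.Icc_subset_Icc le_rfl hml2.le
  have hp23 : IntervalIntegrable p volume m l2 := by
    apply hp_int.mono_set
    rw [Set.uIcc_of_le hml2.le, Set.uIcc_of_le hl1l2.le]
    exact Set.Icc_subset_Icc hl1m.le le_rfl
  have hp2 : IntervalIntegrable p volume m (m + e0) := by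
    apply hp23.mono_set
    rw [Set.uIcc_of_le (by linarith only [he0] : m ≤ m + e0), Set.uIcc_of_le hml2.le]
    exact Set.Icc_subset_Icc le_rfl hmel2.le
  have hp3 : IntervalIntegrable p volume (m + e0) l2 := by
    apply hp23.mono_set
    rw [Set.uIcc_of_le hmel2.le, Set.uIcc_of_le hml2.le]
    exact Set.Icc_subset_Icc (by linarith only [hl1m, he0]) le_rfl
  have hIp : P ≤ ∫ t in l1..l2, p t := by
    have hsplit : (∫ t in l1..l2, p t)
        = (∫ t in l1..m, p t) + ((∫ t in m..m + e0, p t) + ∫ t in m + e0..l2, p t) := by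
      rw [intervalIntegral.integral_add_adjacent_intervals hp2 hp3,
        intervalIntegral.integral_add_adjacent_intervals hp1 hp23]
    have h1' : 0 ≤ ∫ t in l1..m, p t :=
      intervalIntegral.integral_nonneg hl1m.le fun u hu =>
        hp_nonneg u ⟨hu.1, le_trans hu.2 hml2.le⟩
    have h3' : 0 ≤ ∫ t in m + e0..l2, p t :=
      intervalIntegral.integral_nonneg hmel2.le fun u hu =>
        hp_nonneg u ⟨by linarith only [hu.1, hl1m, he0], hu.2⟩
    have h2' : P ≤ ∫ t in m..m + e0, p t := by
      have hc : (∫ t in m..m + e0, (2 * e0 / l2 ^ 4 : ℝ)) ≤ ∫ t in m..m + e0, p t := by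
        refine intervalIntegral.integral_mono_on (by linarith only [he0]) intervalIntegrable_const hp2 ?_
        intro t ht
        have ht1' : (1 + l2) / 2 ≤ t := by rw [← hmd]; exact ht.1
        have ht2' : t ≤ (1 + l2) / 2 + (l2 - 1) / 4 := by rw [← hmd, ← he0d]; exact ht.2
        have hl1e' : l1 ≤ 1 + (l2 - 1) / 4 := by rw [← he0d]; linarith only [hδe0]
        have hkey := p_mid_lb l l1 l2 t h0 h1 h2 hl1 hl1e' ht1' ht2'
        simp only [hpd, hqd]
        rw [he0d]
        exact hkey
      have hval : (∫ t in m..m + e0, (2 * e0 / l2 ^ 4 : ℝ)) = P := by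
        rw [intervalIntegral.integral_const, smul_eq_mul, hPd]; ring
      rw [hval] at hc
      exact hc
    linarith only [hsplit, h1', h2', h3']
  -- bounds on ∫ q
  have hq1b : (∫ t in l1..m, q t) ≤
      (Real.sqrt (32 * e0 * (1 - l ^ 2) * Real.sqrt (l1 - 1)))⁻¹ * cLI := by
    have h1' : (∫ t in l1..m, q t) ≤ ∫ t in l1..m,
        (Real.sqrt (32 * e0 * (1 - l ^ 2) * Real.sqrt (l1 - 1)))⁻¹ *
          (t - l1) ^ (-((3 : ℝ) / 4)) :=
      intervalIntegral.integral_mono_on hl1m.le hq_int1 (hD1.const_mul _) hq_bound1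
    rw [intervalIntegral.integral_const_mul, int_rpow_left l1 m hl1m.le] at h1'
    have h2' : 4 * (m - l1) ^ ((1 : ℝ) / 4) ≤ cLI := by
      rw [hcLId]
      have := Real.rpow_le_rpow (by linarith only [hl1m] : (0:ℝ) ≤ m - l1)
        (by rw [hm2]; linarith only [hl1] : m - l1 ≤ 2 * e0) (by norm_num : (0:ℝ) ≤ 1 / 4)
      linarith only [this]
    have hC1nn : (0:ℝ) ≤ (Real.sqrt (32 * e0 * (1 - l ^ 2) * Real.sqrt (l1 - 1)))⁻¹ :=
      inv_nonneg.2 (Real.sqrt_nonneg _)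
    calc (∫ t in l1..m, q t)
        ≤ (Real.sqrt (32 * e0 * (1 - l ^ 2) * Real.sqrt (l1 - 1)))⁻¹ *
            (4 * (m - l1) ^ ((1 : ℝ) / 4)) := h1'
      _ ≤ (Real.sqrt (32 * e0 * (1 - l ^ 2) * Real.sqrt (l1 - 1)))⁻¹ * cLI :=
          mul_le_mul_of_nonneg_left h2' hC1nn
  have hq2b : (∫ t in m..l2, q t) ≤ CR * (2 * Real.sqrt (2 * e0)) := by
    have h1' : (∫ t in m..l2, q t) ≤ ∫ t in m..l2, CR * (l2 - t) ^ (-((1 : ℝ) / 2)) :=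
      intervalIntegral.integral_mono_on hml2.le hq_int2 (hD2.const_mul _) hq_bound2
    rw [intervalIntegral.integral_const_mul, int_rpow_right m l2 hml2.le, hme,
      ← Real.sqrt_eq_rpow] at h1'
    exact h1'
  have hq_total : (∫ t in l1..l2, q t) ≤
      (Real.sqrt (32 * e0 * (1 - l ^ 2) * Real.sqrt (l1 - 1)))⁻¹ * cLI
        + CR * (2 * Real.sqrt (2 * e0)) := by
    rw [← intervalIntegral.integral_add_adjacent_intervals hq_int1 hq_int2]
    exact add_le_add hq1b hq2b
  have hqint_nn : 0 ≤ ∫ t in l1..l2, q t :=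
    intervalIntegral.integral_nonneg hl1l2.le fun u _ => hqnn u
  -- algebraic bound on B - l1^2
  have hBle : B - l1 ^ 2 ≤ K * Real.sqrt (l1 - 1) := by
    rw [hBd, hKd, hc2d]
    exact Bdiff_le l l1 l2 h0 h1 h2 h3 hl1 hδ1.le
  -- final combination
  set s4 : ℝ := Real.sqrt (Real.sqrt (l1 - 1)) with hs4d
  have hs4 : 0 < s4 := Real.sqrt_pos.2 hδsqrtpos
  have hs4sq : s4 ^ 2 = Real.sqrt (l1 - 1) := Real.sq_sqrt (Real.sqrt_nonneg _)
  have hs4le1 : s4 ≤ 1 := by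
    rw [hs4d, Real.sqrt_le_one, Real.sqrt_le_one]
    linarith only [hδ1]
  have hs4lt : s4 < P / (c5 + c6 + 1) := by
    have h1' : Real.sqrt (l1 - 1) < (P / (c5 + c6 + 1)) ^ 2 := by
      have h := Real.sqrt_lt_sqrt hδ.le hδP
      rwa [show (P / (c5 + c6 + 1)) ^ 4 = ((P / (c5 + c6 + 1)) ^ 2) ^ 2 by ring,
        Real.sqrt_sq (by positivity)] at h
    have h := Real.sqrt_lt_sqrt (Real.sqrt_nonneg _) h1'
    rwa [Real.sqrt_sq (by positivity), ← hs4d] at h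
  have hC1split : (Real.sqrt (32 * e0 * (1 - l ^ 2) * Real.sqrt (l1 - 1)))⁻¹
      = (Real.sqrt (32 * e0 * (1 - l ^ 2)))⁻¹ * s4⁻¹ := by
    rw [hs4d, Real.sqrt_mul (by positivity), mul_inv]
  have hErr : (B - l1 ^ 2) * (∫ t in l1..l2, q t) ≤ c5 * s4 + c6 * s4 ^ 2 := by
    have hKs : 0 ≤ K * Real.sqrt (l1 - 1) := mul_nonneg hK.le (Real.sqrt_nonneg _)
    have ha : (B - l1 ^ 2) * (∫ t in l1..l2, q t)
        ≤ (K * Real.sqrt (l1 - 1)) * (∫ t in l1..l2, q t) :=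
      mul_le_mul_of_nonneg_right hBle hqint_nn
    have hb : (K * Real.sqrt (l1 - 1)) * (∫ t in l1..l2, q t)
        ≤ (K * Real.sqrt (l1 - 1)) *
          ((Real.sqrt (32 * e0 * (1 - l ^ 2) * Real.sqrt (l1 - 1)))⁻¹ * cLI
            + CR * (2 * Real.sqrt (2 * e0))) :=
      mul_le_mul_of_nonneg_left hq_total hKs
    have hcq : (K * Real.sqrt (l1 - 1)) *
          ((Real.sqrt (32 * e0 * (1 - l ^ 2) * Real.sqrt (l1 - 1)))⁻¹ * cLI
            + CR * (2 * Real.sqrt (2 * e0))) = c5 * s4 + c6 * s4 ^ 2 := by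
      rw [hC1split, ← hs4sq, hc5d, hc6d]
      field_simp
    exact le_trans ha (le_trans hb (le_of_eq hcq))
  have hfinal : c5 * s4 + c6 * s4 ^ 2 < P := by
    have ha' : (0:ℝ) ≤ c6 * s4 * (1 - s4) :=
      mul_nonneg (mul_nonneg hc6.le hs4.le) (by linarith only [hs4le1])
    have h2' : s4 * (c5 + c6 + 1) < P := (lt_div_iff₀ hcc).1 hs4lt
    linarith only [ha', h2', hs4]
  rw [hIeq, intervalIntegral.integral_sub hp_int (hq_int.const_mul _),
    intervalIntegral.integral_const_mul]
  linarith only [hIp, hErr, hfinal]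
end

section
/- Fix a real number λ₁ > 0. Then the improper integral ∫_{λ₁}^{λ₂} dt/√((t² − λ₁²)(λ₂² − t²)), viewed as a function of λ₂ ∈ (λ₁, ∞), tends to π/(2λ₁) as λ₂ → λ₁ from the right. -/
open Filter Topology MeasureTheory Set Real

private lemma aux_rpow_left (e c d : ℝ) :
    IntervalIntegrable (fun t => (t - e) ^ (-(1/2) : ℝ)) volume c d := by
  have h := intervalIntegral.intervalIntegrable_rpow' (a := c - e) (b := d - e)
      (r := -(1/2)) (by norm_num)
  simpa using h.comp_sub_right e

private lemma aux_rpow_right (e c d : ℝ) :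
    IntervalIntegrable (fun t => (e - t) ^ (-(1/2) : ℝ)) volume c d := by
  have h := intervalIntegral.intervalIntegrable_rpow' (a := e - c) (b := e - d)
      (r := -(1/2)) (by norm_num)
  simpa using h.comp_sub_left e

private lemma g_meas (a b : ℝ) :
    Measurable (fun t => 1 / Real.sqrt ((t - a) * (b - t))) := by
  simp only [one_div]
  exact ((Real.continuous_sqrt.comp (by continuity)).measurable).inv

private lemma g_int {a b : ℝ} (hab : a < b) :
    IntervalIntegrable (fun t => 1 / Real.sqrt ((t - a) * (b - t))) volume a b := by
  set m := (a + b) / 2 with hm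
  have ham : a ≤ m := by rw [hm]; linarith
  have hmb : m ≤ b := by rw [hm]; linarith
  have hr : (0:ℝ) < (b - a) / 2 := by linarith
  have h1 : IntervalIntegrable (fun t => 1 / Real.sqrt ((t - a) * (b - t))) volume a m := by
    refine ((aux_rpow_left a a m).const_mul (Real.sqrt ((b-a)/2))⁻¹).mono_fun
      ((g_meas a b).aestronglyMeasurable) ?_
    rw [uIoc_of_le ham]
    filter_upwards [ae_restrict_mem measurableSet_Ioc] with t ht
    obtain ⟨hta, htm⟩ := ht
    have h2 : 0 < t - a := by linarith
    have h3 : (b - a) / 2 ≤ b - t := by rw [hm] at htm; linarith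
    have h4 : 0 < b - t := lt_of_lt_of_le hr h3
    rw [Real.norm_of_nonneg (by positivity), Real.norm_of_nonneg (by positivity)]
    rw [Real.rpow_neg h2.le, ← Real.sqrt_eq_rpow, Real.sqrt_mul h2.le, one_div, mul_inv,
      mul_comm]
    gcongr
  have h2 : IntervalIntegrable (fun t => 1 / Real.sqrt ((t - a) * (b - t))) volume m b := by
    refine ((aux_rpow_right b m b).const_mul (Real.sqrt ((b-a)/2))⁻¹).mono_fun
      ((g_meas a b).aestronglyMeasurable) ?_
    rw [uIoc_of_le hmb]
    filter_upwards [ae_restrict_mem measurableSet_Ioc] with t ht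
    obtain ⟨htm, htb⟩ := ht
    have h2 : 0 < t - a := by rw [hm] at htm; linarith
    have h3 : (b - a) / 2 ≤ t - a := by rw [hm] at htm; linarith
    have h4 : 0 ≤ b - t := by linarith
    rw [Real.norm_of_nonneg (by positivity), Real.norm_of_nonneg (by positivity)]
    rw [Real.rpow_neg h4, ← Real.sqrt_eq_rpow, Real.sqrt_mul h2.le, one_div, mul_inv]
    gcongr
  exact h1.trans h2

private lemma g_integral {a b : ℝ} (hab : a < b) :
    ∫ t in a..b, 1 / Real.sqrt ((t - a) * (b - t)) = π := by
  have hba : (0:ℝ) < b - a := by linarith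
  set F : ℝ → ℝ := fun t => Real.arcsin ((2 * t - a - b) / (b - a)) with hF
  have hderiv : ∀ t ∈ Ioo a b, HasDerivAt F (1 / Real.sqrt ((t - a) * (b - t))) t := by
    intro t ht
    obtain ⟨hta, htb⟩ := ht
    set u : ℝ := (2 * t - a - b) / (b - a) with hu
    have hu1 : -1 < u := by
      rw [hu, lt_div_iff₀ hba]; nlinarith
    have hu2 : u < 1 := by
      rw [hu, div_lt_one hba]; nlinarith
    have hlin : HasDerivAt (fun t : ℝ => (2 * t - a - b) / (b - a)) (2 / (b - a)) t := by
      have h0 : HasDerivAt (fun x : ℝ => 2 * x - a - b) 2 t := by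
        simpa [sub_sub] using ((hasDerivAt_id t).const_mul 2).sub_const (a + b)
      exact h0.div_const (b - a)
    have harc := (Real.hasDerivAt_arcsin (ne_of_gt hu1) (ne_of_lt hu2)).comp t hlin
    refine harc.congr_deriv ?_
    symm
    have key : 1 - u ^ 2 = 4 * ((t - a) * (b - t)) / (b - a) ^ 2 := by
      rw [hu]; field_simp; ring
    rw [key]
    have h4 : Real.sqrt (4 * ((t - a) * (b - t)) / (b - a) ^ 2)
        = 2 * Real.sqrt ((t - a) * (b - t)) / (b - a) := by
      rw [div_eq_mul_inv, Real.sqrt_mul (by nlinarith : (0:ℝ) ≤ 4 * ((t - a) * (b - t))), Real.sqrt_inv, Real.sqrt_sq hba.le,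
        Real.sqrt_mul (by norm_num : (0:ℝ) ≤ 4), show Real.sqrt 4 = 2 by
          rw [show (4:ℝ) = 2^2 by norm_num, Real.sqrt_sq]; norm_num]
      ring
    rw [h4]
    have hX : 0 < Real.sqrt ((t - a) * (b - t)) := by
      apply Real.sqrt_pos.2; nlinarith
    field_simp
  have hcont : Continuous F := by
    apply Real.continuous_arcsin.comp
    continuity
  have ha : Tendsto F (𝓝[>] a) (𝓝 (-(π/2))) := by
    have : Tendsto F (𝓝 a) (𝓝 (F a)) := hcont.continuousAt.tendsto
    have hFa : F a = -(π/2) := by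
      show Real.arcsin ((2 * a - a - b) / (b - a)) = -(π/2)
      have heq : (2 * a - a - b) / (b - a) = -1 := by
        field_simp; ring
      rw [heq, Real.arcsin_neg, Real.arcsin_one]
    rw [← hFa]
    exact this.mono_left nhdsWithin_le_nhds
  have hb : Tendsto F (𝓝[<] b) (𝓝 (π/2)) := by
    have : Tendsto F (𝓝 b) (𝓝 (F b)) := hcont.continuousAt.tendsto
    have hFb : F b = π/2 := by
      show Real.arcsin ((2 * b - a - b) / (b - a)) = π/2
      have heq : (2 * b - a - b) / (b - a) = 1 := by
        field_simp; ring
      rw [heq, Real.arcsin_one]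
    rw [← hFb]
    exact this.mono_left nhdsWithin_le_nhds
  rw [intervalIntegral.integral_eq_sub_of_hasDerivAt_of_tendsto hab hderiv (g_int hab) ha hb]
  ring

set_option maxHeartbeats 1000000 in
theorem stmt_13 (l1 : ℝ) (h : 0 < l1) :
    Filter.Tendsto
      (fun l2 : ℝ =>
        ∫ t in l1..l2, 1 / Real.sqrt ((t ^ 2 - l1 ^ 2) * (l2 ^ 2 - t ^ 2)))
      (nhdsWithin l1 (Set.Ioi l1)) (nhds (Real.pi / (2 * l1))) := by
  have hπ := Real.pi_pos
  have hsq : Real.sqrt (2 * l1 * (l1 + l1)) = 2 * l1 := by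
    rw [show 2 * l1 * (l1 + l1) = (2 * l1) ^ 2 by ring, Real.sqrt_sq (by linarith)]
  -- the two bounding functions
  have hLlim : Tendsto (fun b : ℝ => π / Real.sqrt (2 * b * (l1 + b))) (𝓝[>] l1)
      (𝓝 (π / (2 * l1))) := by
    have hc : ContinuousAt (fun b : ℝ => π / Real.sqrt (2 * b * (l1 + b))) l1 := by
      apply ContinuousAt.div continuousAt_const
        ((Real.continuous_sqrt.comp (by continuity)).continuousAt)
      show Real.sqrt (2 * l1 * (l1 + l1)) ≠ 0
      rw [hsq]; positivity
    have h2 : Tendsto (fun b : ℝ => π / Real.sqrt (2 * b * (l1 + b))) (𝓝[>] l1)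
        (𝓝 (π / Real.sqrt (2 * l1 * (l1 + l1)))) :=
      hc.tendsto.mono_left nhdsWithin_le_nhds
    have h3 : π / Real.sqrt (2 * l1 * (l1 + l1)) = π / (2 * l1) := by rw [hsq]
    rwa [h3] at h2
  have hUlim : Tendsto (fun b : ℝ => π / Real.sqrt (2 * l1 * (l1 + b))) (𝓝[>] l1)
      (𝓝 (π / (2 * l1))) := by
    have hc : ContinuousAt (fun b : ℝ => π / Real.sqrt (2 * l1 * (l1 + b))) l1 := by
      apply ContinuousAt.div continuousAt_const
        ((Real.continuous_sqrt.comp (by continuity)).continuousAt)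
      show Real.sqrt (2 * l1 * (l1 + l1)) ≠ 0
      rw [hsq]; positivity
    have h2 : Tendsto (fun b : ℝ => π / Real.sqrt (2 * l1 * (l1 + b))) (𝓝[>] l1)
        (𝓝 (π / Real.sqrt (2 * l1 * (l1 + l1)))) :=
      hc.tendsto.mono_left nhdsWithin_le_nhds
    have h3 : π / Real.sqrt (2 * l1 * (l1 + l1)) = π / (2 * l1) := by rw [hsq]
    rwa [h3] at h2
  -- the key bounds for each b > l1
  have key : ∀ b : ℝ, l1 < b →
      π / Real.sqrt (2 * b * (l1 + b)) ≤
        (∫ t in l1..b, 1 / Real.sqrt ((t ^ 2 - l1 ^ 2) * (b ^ 2 - t ^ 2))) ∧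
      (∫ t in l1..b, 1 / Real.sqrt ((t ^ 2 - l1 ^ 2) * (b ^ 2 - t ^ 2))) ≤
        π / Real.sqrt (2 * l1 * (l1 + b)) := by
    intro b hb
    have hb0 : 0 < b := h.trans hb
    have hclow : (0:ℝ) < 2 * l1 * (l1 + b) := by nlinarith
    have hchigh : (0:ℝ) < 2 * b * (l1 + b) := by nlinarith
    have hg := g_int hb
    have hgval := g_integral hb
    have fmeas : Measurable (fun t : ℝ => 1 / Real.sqrt ((t ^ 2 - l1 ^ 2) * (b ^ 2 - t ^ 2))) := by
      simp only [one_div]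
      exact ((Real.continuous_sqrt.comp (by continuity)).measurable).inv
    -- pointwise bounds on Icc l1 b
    have bound_up : ∀ t ∈ Icc l1 b,
        1 / Real.sqrt ((t ^ 2 - l1 ^ 2) * (b ^ 2 - t ^ 2)) ≤
          (Real.sqrt (2 * l1 * (l1 + b)))⁻¹ * (1 / Real.sqrt ((t - l1) * (b - t))) := by
      intro t ht
      obtain ⟨ht1, ht2⟩ := ht
      have hX : (0:ℝ) ≤ (t - l1) * (b - t) := by nlinarith
      have hY : 2 * l1 * (l1 + b) ≤ (t + l1) * (b + t) := by nlinarith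
      rw [show (t ^ 2 - l1 ^ 2) * (b ^ 2 - t ^ 2) = ((t - l1) * (b - t)) * ((t + l1) * (b + t))
        by ring, Real.sqrt_mul hX, one_div, mul_inv, one_div, mul_comm ((Real.sqrt (2 * l1 * (l1 + b)))⁻¹)]
      gcongr
    have bound_low : ∀ t ∈ Icc l1 b,
        (Real.sqrt (2 * b * (l1 + b)))⁻¹ * (1 / Real.sqrt ((t - l1) * (b - t))) ≤
          1 / Real.sqrt ((t ^ 2 - l1 ^ 2) * (b ^ 2 - t ^ 2)) := by
      intro t ht
      obtain ⟨ht1, ht2⟩ := ht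
      have hX : (0:ℝ) ≤ (t - l1) * (b - t) := by nlinarith
      have hY0 : (0:ℝ) < (t + l1) * (b + t) := by nlinarith
      have hY : (t + l1) * (b + t) ≤ 2 * b * (l1 + b) := by nlinarith
      rw [show (t ^ 2 - l1 ^ 2) * (b ^ 2 - t ^ 2) = ((t - l1) * (b - t)) * ((t + l1) * (b + t))
        by ring, Real.sqrt_mul hX, one_div, one_div, mul_inv,
        mul_comm ((Real.sqrt (2 * b * (l1 + b)))⁻¹)]
      gcongr <;> first
        | exact Real.sqrt_pos.2 hY0
        | exact Real.sqrt_le_sqrt hY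
        | positivity
    -- integrability of f
    have hf : IntervalIntegrable
        (fun t : ℝ => 1 / Real.sqrt ((t ^ 2 - l1 ^ 2) * (b ^ 2 - t ^ 2))) volume l1 b := by
      refine (hg.const_mul (Real.sqrt (2 * l1 * (l1 + b)))⁻¹).mono_fun
        fmeas.aestronglyMeasurable ?_
      rw [uIoc_of_le hb.le]
      filter_upwards [ae_restrict_mem measurableSet_Ioc] with t ht
      have ht' : t ∈ Icc l1 b := Ioc_subset_Icc_self ht
      have h1 : (0:ℝ) ≤ 1 / Real.sqrt ((t ^ 2 - l1 ^ 2) * (b ^ 2 - t ^ 2)) := by positivity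
      have h2 : (0:ℝ) ≤ (Real.sqrt (2 * l1 * (l1 + b)))⁻¹ *
          (1 / Real.sqrt ((t - l1) * (b - t))) := by positivity
      rw [Real.norm_of_nonneg h1, Real.norm_of_nonneg h2]
      exact bound_up t ht'
    constructor
    · have hmono := intervalIntegral.integral_mono_on hb.le
        (hg.const_mul (Real.sqrt (2 * b * (l1 + b)))⁻¹) hf bound_low
      rw [div_eq_mul_inv, mul_comm]
      rwa [intervalIntegral.integral_const_mul, hgval] at hmono
    · have hmono := intervalIntegral.integral_mono_on hb.le hf
        (hg.const_mul (Real.sqrt (2 * l1 * (l1 + b)))⁻¹) bound_up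
      rw [div_eq_mul_inv, mul_comm]
      rwa [intervalIntegral.integral_const_mul, hgval] at hmono
  refine tendsto_of_tendsto_of_tendsto_of_le_of_le' hLlim hUlim ?_ ?_
  · filter_upwards [self_mem_nhdsWithin] with b hb
    exact (key b hb).1
  · filter_upwards [self_mem_nhdsWithin] with b hb
    exact (key b hb).2
end

section
/- Fix real numbers λ and λ₁ with 0 < λ < 1 < λ₁. Then there exists δ > 0 such that for every λ₂ with λ₁ < λ₂ < λ₁ + δ, the improper integral ξ₂(λ₁, λ₂) = ∫_{λ₁}^{λ₂} (t² − b²)/√((t² − λ²)(t² − 1)(t² − λ₁²)(λ₂² − t²)) dt is strictly positive, where b = √((α + √(α² − 4λλ₁λ₂))/2) and α = λ + λ₁ − λ₂ − λλ₁ + λλ₂ + λ₁λ₂. -/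
open MeasureTheory Set intervalIntegral


lemma aux_sqrt_le (x s : ℝ) (hx : 0 ≤ x) (hs : 0 < s) :
    Real.sqrt x ≤ (x + s^2)/(2*s) := by
  rw [le_div_iff₀ (by positivity)]
  nlinarith [Real.sq_sqrt hx, Real.sqrt_nonneg x, sq_nonneg (Real.sqrt x - s)]

lemma aux_inv_sqrt_diff (a b : ℝ) (ha : 0 < a) (hab : a ≤ b) :
    1/Real.sqrt a - 1/Real.sqrt b ≤ (b - a)/(2*a*Real.sqrt a) := by
  have hb : 0 < b := lt_of_lt_of_le ha hab
  have hsa : 0 < Real.sqrt a := Real.sqrt_pos.2 ha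
  have hsb : 0 < Real.sqrt b := Real.sqrt_pos.2 hb
  have hsab : Real.sqrt a ≤ Real.sqrt b := Real.sqrt_le_sqrt hab
  have ha2 := Real.sq_sqrt ha.le
  have hb2 := Real.sq_sqrt hb.le
  rw [div_sub_div _ _ (ne_of_gt hsa) (ne_of_gt hsb), div_le_div_iff₀ (by positivity) (by positivity)]
  nlinarith [mul_pos hsa hsb, sq_nonneg (Real.sqrt b - Real.sqrt a)]


lemma aux_integrable_base (a b : ℝ) (hab : a < b) :
    IntervalIntegrable (fun t => (Real.sqrt ((t-a)*(b-t)))⁻¹) volume a b := by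
  set m := (a+b)/2 with hm
  have ham : a < m := by simp only [hm]; linarith
  have hmb : m < b := by simp only [hm]; linarith
  have hmeas : Measurable (fun t : ℝ => (Real.sqrt ((t-a)*(b-t)))⁻¹) :=
    ((Real.continuous_sqrt.measurable).comp (by fun_prop)).inv
  have h1 : IntervalIntegrable (fun t => ((t-a) ^ (-(1/2) : ℝ))) volume a m := by
    have := (intervalIntegrable_rpow' (a := 0) (b := m - a) (r := -(1/2)) (by norm_num)).comp_sub_right a
    simpa using this
  have h2 : IntervalIntegrable (fun t => ((b-t) ^ (-(1/2) : ℝ))) volume m b := by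
    have := ((intervalIntegrable_rpow' (a := 0) (b := b - m) (r := -(1/2)) (by norm_num)).comp_sub_left b).symm
    simpa using this
  have hr : 0 < (b-a)/2 := by linarith
  have key : ∀ (x y : ℝ), 0 < x → (b-a)/2 ≤ y →
      (Real.sqrt (x*y))⁻¹ ≤ ((b-a)/2)^(-(1/2):ℝ) * x ^ (-(1/2):ℝ) := by
    intro x y hx hy
    have hy0 : 0 < y := lt_of_lt_of_le hr hy
    rw [Real.rpow_neg hr.le, Real.rpow_neg hx.le, ← Real.sqrt_eq_rpow, ← Real.sqrt_eq_rpow,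
      ← mul_inv, ← Real.sqrt_mul hr.le]
    apply inv_anti₀ (Real.sqrt_pos.2 (by positivity))
    apply Real.sqrt_le_sqrt
    nlinarith
  have half1 : IntervalIntegrable (fun t => (Real.sqrt ((t-a)*(b-t)))⁻¹) volume a m := by
    apply h1.const_mul (((b-a)/2)^(-(1/2):ℝ)) |>.mono_fun
      (hmeas.aestronglyMeasurable)
    · filter_upwards [ae_restrict_mem measurableSet_uIoc] with t ht
      rw [uIoc_of_le ham.le] at ht
      have hx : 0 < t - a := by linarith [ht.1]
      have hy : (b-a)/2 ≤ b - t := by simp only [hm] at ht; linarith [ht.2]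
      have h := key (t-a) (b-t) hx hy
      rw [Real.norm_eq_abs, Real.norm_eq_abs]
      rw [abs_of_nonneg (by positivity), abs_of_nonneg (by positivity)]
      exact h
  have half2 : IntervalIntegrable (fun t => (Real.sqrt ((t-a)*(b-t)))⁻¹) volume m b := by
    apply h2.const_mul (((b-a)/2)^(-(1/2):ℝ)) |>.mono_fun
      (hmeas.aestronglyMeasurable)
    · filter_upwards [ae_restrict_mem measurableSet_uIoc] with t ht
      rw [uIoc_of_le hmb.le] at ht
      rcases eq_or_lt_of_le ht.2 with hb | hb
      · subst hb
        simp only [sub_self, mul_zero, Real.sqrt_zero, inv_zero, norm_zero]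
        positivity
      have hx : 0 < b - t := by linarith
      have hy : (b-a)/2 ≤ t - a := by simp only [hm] at ht; linarith [ht.1]
      have h := key (b-t) (t-a) hx hy
      rw [Real.norm_eq_abs, Real.norm_eq_abs]
      rw [abs_of_nonneg (by positivity), abs_of_nonneg (by positivity)]
      calc (Real.sqrt ((t-a)*(b-t)))⁻¹ = (Real.sqrt ((b-t)*(t-a)))⁻¹ := by rw [mul_comm]
        _ ≤ _ := h
  exact half1.trans half2



lemma aux_integrable_dom (a b C : ℝ) (hab : a < b) (F : ℝ → ℝ)
    (hm : AEStronglyMeasurable F (volume.restrict (Set.uIoc a b)))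
    (h : ∀ t ∈ Set.Ioc a b, |F t| ≤ C * (Real.sqrt ((t-a)*(b-t)))⁻¹) :
    IntervalIntegrable F volume a b := by
  have hC : 0 ≤ C := by
    have := h ((a+b)/2) ⟨by linarith, by linarith⟩
    have h2 : (0:ℝ) ≤ C * (Real.sqrt (((a+b)/2-a)*(b-(a+b)/2)))⁻¹ := le_trans (abs_nonneg _) this
    have hpos : (0:ℝ) < (Real.sqrt (((a+b)/2-a)*(b-(a+b)/2)))⁻¹ :=
      inv_pos.2 (Real.sqrt_pos.2 (by nlinarith))
    nlinarith [h2, hpos]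
  apply ((aux_integrable_base a b hab).const_mul C).mono_fun hm
  filter_upwards [ae_restrict_mem measurableSet_uIoc] with t ht
  rw [uIoc_of_le hab.le] at ht
  rw [Real.norm_eq_abs, Real.norm_eq_abs]
  refine (h t ht).trans ?_
  rw [abs_of_nonneg (by positivity)]

lemma aux_integral_odd (a b : ℝ) :
    (∫ t in a..b, (t - (a+b)/2) / Real.sqrt ((t-a)*(b-t))) = 0 := by
  set u : ℝ → ℝ := fun t => (t - (a+b)/2) / Real.sqrt ((t-a)*(b-t)) with hu
  have key : ∀ x, u ((a+b) - x) = - u x := by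
    intro x
    simp only [hu]
    have harg : ((a+b) - x - a) * (b - ((a+b) - x)) = (x - a)*(b - x) := by ring
    rw [harg]
    rw [show (a+b) - x - (a+b)/2 = -(x - (a+b)/2) by ring, neg_div]
  have h1 : (∫ x in a..b, u ((a+b) - x)) = ∫ x in (a+b) - b..(a+b) - a, u x :=
    integral_comp_sub_left u (a+b)
  simp only [add_sub_cancel_right, add_sub_cancel_left] at h1
  have h2 : (∫ x in a..b, u ((a+b) - x)) = - ∫ x in a..b, u x := by
    simp_rw [key]; exact intervalIntegral.integral_neg
  rw [h2] at h1
  linarith [h1]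


section
variable {l l1 l2 : ℝ}

lemma polyA (h0 : 0 < l) (h1 : l < 1) (h2 : 1 < l1) (h3 : l1 < l2) (h4 : l2 ≤ l1 + 1) :
    0 ≤ l + l1 - l2 - l * l1 + l * l2 + l1 * l2 := by
  nlinarith [mul_pos (show (0:ℝ)<l1-1 by linarith) (show (0:ℝ)<l2-1 by linarith),
    mul_nonneg h0.le (show (0:ℝ) ≤ l2-l1 by linarith)]

lemma polyD (h0 : 0 < l) (h1 : l < 1) (h2 : 1 < l1) (h3 : l1 < l2)
    (hδ : 4*l*l1*(l2-l1) ≤ (l1^2-l)^2) :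
    0 ≤ (l + l1 - l2 - l * l1 + l * l2 + l1 * l2)^2 - 4*l*l1*l2 := by
  have hid : (l + l1 - l2 - l * l1 + l * l2 + l1 * l2)^2 - 4*l*l1*l2
      = (l1^2-l)^2 - 4*l*l1*(l2-l1) + 2*(l+l1^2)*((l+l1-1)*(l2-l1)) + ((l+l1-1)*(l2-l1))^2 := by
    ring
  have t1 : (0:ℝ) ≤ (l+l1^2)*((l+l1-1)*(l2-l1)) :=
    mul_nonneg (by positivity) (mul_nonneg (by linarith) (by linarith))
  have t2 := sq_nonneg ((l+l1-1)*(l2-l1))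
  linarith

lemma polyKey (h0 : 0 < l) (h1 : l < 1) (h2 : 1 < l1) (h3 : l1 < l2)
    (hδ : (1+(l+l1-1)^2)*(l2-l1) ≤ 2*l1^2*(1-l)) :
    2*(l1^2*(1-l))*(l2-l1) ≤ 4*(l1^2-l)*((l1+l2)/2)^2
      - 2*(l1^2-l)*(l + l1 - l2 - l * l1 + l * l2 + l1 * l2)
      - (((l + l1 - l2 - l * l1 + l * l2 + l1 * l2)^2 - 4*l*l1*l2) + (l1^2-l)^2) := by
  have hid : 4*(l1^2-l)*((l1+l2)/2)^2
      - 2*(l1^2-l)*(l + l1 - l2 - l * l1 + l * l2 + l1 * l2)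
      - (((l + l1 - l2 - l * l1 + l * l2 + l1 * l2)^2 - 4*l*l1*l2) + (l1^2-l)^2)
      - 2*(l1^2*(1-l))*(l2-l1)
      = (l2-l1)*(2*l1^2*(1-l) + ((l1^2-l)-(l+l1-1)^2)*(l2-l1)) := by ring
  have hε0 : (0:ℝ) < l2 - l1 := by linarith
  have hs0 : (0:ℝ) < l1^2 - l := by nlinarith
  have hbr : 0 ≤ 2*l1^2*(1-l) + ((l1^2-l)-(l+l1-1)^2)*(l2-l1) := by
    nlinarith [mul_nonneg hs0.le hε0.le]
  nlinarith [mul_nonneg hε0.le hbr]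

end

section
variable {l l1 l2 t : ℝ}

lemma polyGlb (h0 : 0 < l) (h1 : l < 1) (h2 : 1 < l1) (h3 : l1 < l2)
    (ht1 : l1 ≤ t) (ht2 : t ≤ l2) :
    (l1^2 - l^2)*((l1^2-1)*((l1+l1)*(l2+l1))) ≤ (t^2-l^2)*((t^2-1)*((t+l1)*(l2+t))) := by
  have e1 : (0:ℝ) ≤ l1^2 - l^2 := by nlinarith
  have e2 : (0:ℝ) ≤ l1^2 - 1 := by nlinarith
  have e3 : (0:ℝ) ≤ l1 + l1 := by linarith
  have e4 : (0:ℝ) ≤ l2 + l1 := by linarith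
  have f1 : l1^2 - l^2 ≤ t^2 - l^2 := by nlinarith
  have f2 : l1^2 - 1 ≤ t^2 - 1 := by nlinarith
  have f3 : l1 + l1 ≤ t + l1 := by linarith
  have f4 : l2 + l1 ≤ l2 + t := by linarith
  have g1 : (0:ℝ) ≤ t^2 - l^2 := by nlinarith
  have g2 : (0:ℝ) ≤ t^2 - 1 := by nlinarith
  have g3 : (0:ℝ) ≤ t + l1 := by linarith
  have g4 : (0:ℝ) ≤ l2 + t := by linarith
  gcongr

lemma polyGub (h0 : 0 < l) (h1 : l < 1) (h2 : 1 < l1) (h3 : l1 < l2)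
    (ht1 : l1 ≤ t) (ht2 : t ≤ l2) :
    (t^2-l^2)*((t^2-1)*((t+l1)*(l2+t))) ≤ (l2^2-l^2)*((l2^2-1)*((l2+l1)*(l2+l2))) := by
  have e1 : (0:ℝ) ≤ t^2 - l^2 := by nlinarith
  have e2 : (0:ℝ) ≤ t^2 - 1 := by nlinarith
  have e3 : (0:ℝ) ≤ t + l1 := by linarith
  have e4 : (0:ℝ) ≤ l2 + t := by linarith
  have f1 : t^2 - l^2 ≤ l2^2 - l^2 := by nlinarith
  have f2 : t^2 - 1 ≤ l2^2 - 1 := by nlinarith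
  have f3 : t + l1 ≤ l2 + l1 := by linarith
  have f4 : l2 + t ≤ l2 + l2 := by linarith
  have g1 : (0:ℝ) ≤ l2^2 - l^2 := by nlinarith
  have g2 : (0:ℝ) ≤ l2^2 - 1 := by nlinarith
  have g3 : (0:ℝ) ≤ l2 + l1 := by linarith
  have g4 : (0:ℝ) ≤ l2 + l2 := by linarith
  gcongr

lemma polyGgm (h0 : 0 < l) (h1 : l < 1) (h2 : 1 < l1) (h3 : l1 < l2) :
    (l1^2-l^2)*((l1^2-1)*((l1+l1)*(l1+l1))) ≤ (l1^2-l^2)*((l1^2-1)*((l1+l1)*(l2+l1))) := by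
  have e1 : (0:ℝ) ≤ l1^2 - l^2 := by nlinarith
  have e2 : (0:ℝ) ≤ l1^2 - 1 := by nlinarith
  have e3 : (0:ℝ) ≤ l1 + l1 := by linarith
  have f4 : l1 + l1 ≤ l2 + l1 := by linarith
  have g4 : (0:ℝ) ≤ l2 + l1 := by linarith
  gcongr

lemma polyGgp (h0 : 0 < l) (h1 : l < 1) (h2 : 1 < l1) (h3 : l1 < l2) (h4 : l2 ≤ l1+1) :
    (l2^2-l^2)*((l2^2-1)*((l2+l1)*(l2+l2)))
      ≤ ((l1+1)^2 - l^2)*(((l1+1)^2-1)*(((l1+1)+(l1+1))*((l1+1)+(l1+1)))) := by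
  have e1 : (0:ℝ) ≤ l2^2 - l^2 := by nlinarith
  have e2 : (0:ℝ) ≤ l2^2 - 1 := by nlinarith
  have e3 : (0:ℝ) ≤ l2 + l1 := by linarith
  have e4 : (0:ℝ) ≤ l2 + l2 := by linarith
  have f1 : l2^2 - l^2 ≤ (l1+1)^2 - l^2 := by nlinarith
  have f2 : l2^2 - 1 ≤ (l1+1)^2 - 1 := by nlinarith
  have f3 : l2 + l1 ≤ (l1+1) + (l1+1) := by linarith
  have f4 : l2 + l2 ≤ (l1+1) + (l1+1) := by linarith
  have g1 : (0:ℝ) ≤ (l1+1)^2 - l^2 := by nlinarith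
  have g2 : (0:ℝ) ≤ (l1+1)^2 - 1 := by nlinarith
  have g3 : (0:ℝ) ≤ (l1+1) + (l1+1) := by linarith
  gcongr

set_option maxHeartbeats 2000000 in
lemma polyGtele (h0 : 0 < l) (h1 : l < 1) (h2 : 1 < l1) (h3 : l1 < l2) (h4 : l2 ≤ l1+1) :
    (l2^2-l^2)*((l2^2-1)*((l2+l1)*(l2+l2))) - (l1^2-l^2)*((l1^2-1)*((l1+l1)*(l2+l1)))
      ≤ 8*(l1+1)^7*(l2-l1) := by
  have hL2 : 2 < l1+1 := by linarith
  have hε0 : (0:ℝ) ≤ l2 - l1 := by linarith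
  have tele : (l2^2-l^2)*((l2^2-1)*((l2+l1)*(l2+l2))) - (l1^2-l^2)*((l1^2-1)*((l1+l1)*(l2+l1)))
      = (l2^2-l1^2)*((l2^2-1)*((l2+l1)*(l2+l2)))
      + (l1^2-l^2)*((l2^2-l1^2)*((l2+l1)*(l2+l2)))
      + (l1^2-l^2)*((l1^2-1)*((l2-l1)*(l2+l2)))
      + (l1^2-l^2)*((l1^2-1)*((l1+l1)*(l2-l1))) := by ring
  have b1 : (l2^2-l1^2)*((l2^2-1)*((l2+l1)*(l2+l2))) ≤ (2*(l1+1)*(l2-l1))*((l1+1)^2*((l1+1)^2*(l1+1)^2)) := by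
    have d1 : l2^2 - l1^2 ≤ 2*(l1+1)*(l2-l1) := by nlinarith
    have n1 : (0:ℝ) ≤ l2^2 - l1^2 := by nlinarith
    have u2 : l2^2 - 1 ≤ (l1+1)^2 := by nlinarith
    have n2 : (0:ℝ) ≤ l2^2 - 1 := by nlinarith
    have u3 : l2 + l1 ≤ (l1+1)^2 := by nlinarith
    have n3 : (0:ℝ) ≤ l2 + l1 := by linarith
    have u4 : l2 + l2 ≤ (l1+1)^2 := by nlinarith
    have n4 : (0:ℝ) ≤ l2 + l2 := by linarith
    have hd0 : (0:ℝ) ≤ 2*(l1+1)*(l2-l1) := by nlinarith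
    have hLsq : (0:ℝ) ≤ (l1+1)^2 := by positivity
    gcongr
  have b2 : (l1^2-l^2)*((l2^2-l1^2)*((l2+l1)*(l2+l2))) ≤ (l1+1)^2*((2*(l1+1)*(l2-l1))*((l1+1)^2*(l1+1)^2)) := by
    have d1 : l2^2 - l1^2 ≤ 2*(l1+1)*(l2-l1) := by nlinarith
    have n1 : (0:ℝ) ≤ l2^2 - l1^2 := by nlinarith
    have u1 : l1^2 - l^2 ≤ (l1+1)^2 := by nlinarith
    have n0 : (0:ℝ) ≤ l1^2 - l^2 := by nlinarith
    have u3 : l2 + l1 ≤ (l1+1)^2 := by nlinarith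
    have n3 : (0:ℝ) ≤ l2 + l1 := by linarith
    have u4 : l2 + l2 ≤ (l1+1)^2 := by nlinarith
    have n4 : (0:ℝ) ≤ l2 + l2 := by linarith
    have hd0 : (0:ℝ) ≤ 2*(l1+1)*(l2-l1) := by nlinarith
    have hLsq : (0:ℝ) ≤ (l1+1)^2 := by positivity
    gcongr
  have b3 : (l1^2-l^2)*((l1^2-1)*((l2-l1)*(l2+l2))) ≤ (l1+1)^2*((l1+1)^2*((l2-l1)*(l1+1)^2)) := by
    have u1 : l1^2 - l^2 ≤ (l1+1)^2 := by nlinarith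
    have n0 : (0:ℝ) ≤ l1^2 - l^2 := by nlinarith
    have u2 : l1^2 - 1 ≤ (l1+1)^2 := by nlinarith
    have n2 : (0:ℝ) ≤ l1^2 - 1 := by nlinarith
    have u4 : l2 + l2 ≤ (l1+1)^2 := by nlinarith
    have n4 : (0:ℝ) ≤ l2 + l2 := by linarith
    have hLsq : (0:ℝ) ≤ (l1+1)^2 := by positivity
    gcongr
  have b4 : (l1^2-l^2)*((l1^2-1)*((l1+l1)*(l2-l1))) ≤ (l1+1)^2*((l1+1)^2*((l1+1)^2*(l2-l1))) := by
    have u1 : l1^2 - l^2 ≤ (l1+1)^2 := by nlinarith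
    have n0 : (0:ℝ) ≤ l1^2 - l^2 := by nlinarith
    have u2 : l1^2 - 1 ≤ (l1+1)^2 := by nlinarith
    have n2 : (0:ℝ) ≤ l1^2 - 1 := by nlinarith
    have u3 : l1 + l1 ≤ (l1+1)^2 := by nlinarith
    have n3 : (0:ℝ) ≤ l1 + l1 := by linarith
    have hLsq : (0:ℝ) ≤ (l1+1)^2 := by positivity
    gcongr
  have hfin : (2*(l1+1)*(l2-l1))*((l1+1)^2*((l1+1)^2*(l1+1)^2)) + (l1+1)^2*((2*(l1+1)*(l2-l1))*((l1+1)^2*(l1+1)^2))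
      + (l1+1)^2*((l1+1)^2*((l2-l1)*(l1+1)^2)) + (l1+1)^2*((l1+1)^2*((l1+1)^2*(l2-l1))) ≤ 8*(l1+1)^7*(l2-l1) := by
    have hid : 8*(l1+1)^7*(l2-l1) - ((2*(l1+1)*(l2-l1))*((l1+1)^2*((l1+1)^2*(l1+1)^2)) + (l1+1)^2*((2*(l1+1)*(l2-l1))*((l1+1)^2*(l1+1)^2))
        + (l1+1)^2*((l1+1)^2*((l2-l1)*(l1+1)^2)) + (l1+1)^2*((l1+1)^2*((l1+1)^2*(l2-l1))))
        = (l2-l1)*(4*(l1+1)^7 - 2*(l1+1)^6) := by ring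
    nlinarith [mul_nonneg hε0 (show (0:ℝ) ≤ 4*(l1+1)^7 - 2*(l1+1)^6 by nlinarith [pow_pos (show (0:ℝ)<l1+1 by linarith) 6])]
  linarith
end

set_option maxHeartbeats 1000000 in
theorem stmt_16 (l l1 : ℝ) (h0 : 0 < l) (h1 : l < 1) (h2 : 1 < l1) :
    ∃ δ > (0 : ℝ), ∀ l2 : ℝ, l1 < l2 → l2 < l1 + δ →
      0 < ∫ t in l1..l2,
          (t ^ 2 -
              (l + l1 - l2 - l * l1 + l * l2 + l1 * l2 +
                  Real.sqrt ((l + l1 - l2 - l * l1 + l * l2 + l1 * l2) ^ 2 - 4 * l * l1 * l2)) /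
                2) /
            Real.sqrt ((t ^ 2 - l ^ 2) * (t ^ 2 - 1) * (t ^ 2 - l1 ^ 2) * (l2 ^ 2 - t ^ 2)) := by
  have hl10 : 0 < l1 := by linarith
  obtain ⟨L, hL⟩ : ∃ x:ℝ, x = l1 + 1 := ⟨_, rfl⟩
  have hL2 : 2 < L := by rw [hL]; linarith
  obtain ⟨s, hsdef⟩ : ∃ x:ℝ, x = l1^2 - l := ⟨_, rfl⟩
  have hs0 : 0 < s := by rw [hsdef]; nlinarith
  obtain ⟨gm, hgmdef⟩ : ∃ x:ℝ, x = (l1^2 - l^2)*((l1^2-1)*((l1+l1)*(l1+l1))) := ⟨_, rfl⟩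
  have hgm0 : 0 < gm := by
    rw [hgmdef]
    have e1 : 0 < l1^2 - l^2 := by nlinarith
    have e2 : 0 < l1^2 - 1 := by nlinarith
    positivity
  obtain ⟨gp, hgpdef⟩ : ∃ x:ℝ, x = ((l1+1)^2 - l^2)*(((l1+1)^2-1)*(((l1+1)+(l1+1))*((l1+1)+(l1+1)))) := ⟨_, rfl⟩
  have hgp0 : 0 < gp := by
    rw [hgpdef]
    have e1 : 0 < (l1+1)^2 - l^2 := by nlinarith
    have e2 : 0 < (l1+1)^2 - 1 := by nlinarith
    positivity
  obtain ⟨K, hKdef⟩ : ∃ x:ℝ, x = 8*(l1+1)^7 := ⟨_, rfl⟩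
  have hK0 : 0 < K := by rw [hKdef]; positivity
  obtain ⟨cnum, hcdef⟩ : ∃ x:ℝ, x = l1^2*(1-l) := ⟨_, rfl⟩
  have hcnum0 : 0 < cnum := by rw [hcdef]; exact mul_pos (by positivity) (by linarith)
  have hsgm : 0 < Real.sqrt gm := Real.sqrt_pos.2 hgm0
  have hsgp : 0 < Real.sqrt gp := Real.sqrt_pos.2 hgp0
  obtain ⟨δ1, hδ1def⟩ : ∃ x:ℝ, x = 2*l1^2*(1-l)/(1+(l+l1-1)^2) := ⟨_, rfl⟩
  have hδ10 : 0 < δ1 := by rw [hδ1def]; exact div_pos (mul_pos (by positivity) (by linarith)) (by positivity)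
  obtain ⟨δ2, hδ2def⟩ : ∃ x:ℝ, x = s^2/(4*l*l1) := ⟨_, rfl⟩
  have hδ20 : 0 < δ2 := by rw [hδ2def]; positivity
  obtain ⟨δ3, hδ3def⟩ : ∃ x:ℝ, x = cnum*gm*Real.sqrt gm/(2*s*Real.sqrt gp*L*K) := ⟨_, rfl⟩
  have hδ30 : 0 < δ3 := by
    rw [hδ3def]
    exact div_pos (mul_pos (mul_pos hcnum0 hgm0) hsgm)
      (mul_pos (mul_pos (mul_pos (mul_pos two_pos hs0) hsgp) (by linarith)) hK0)
  refine ⟨min 1 (min δ1 (min δ2 δ3)), by positivity, ?_⟩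
  intro l2 hl2 hl2'
  obtain ⟨ε, hεdef⟩ : ∃ x:ℝ, x = l2 - l1 := ⟨_, rfl⟩
  have hεmin : ε < min 1 (min δ1 (min δ2 δ3)) := by rw [hεdef]; linarith
  have hε0 : 0 < ε := by rw [hεdef]; linarith
  have hε1 : ε ≤ 1 := ((lt_min_iff.1 hεmin).1).le
  have hεδ1 : ε ≤ δ1 := ((lt_min_iff.1 (lt_min_iff.1 hεmin).2).1).le
  have hεδ2 : ε ≤ δ2 := ((lt_min_iff.1 (lt_min_iff.1 (lt_min_iff.1 hεmin).2).2).1).le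
  have hεδ3 : ε ≤ δ3 := ((lt_min_iff.1 (lt_min_iff.1 (lt_min_iff.1 hεmin).2).2).2).le
  have hl2l1 : l2 ≤ l1 + 1 := by rw [hεdef] at hε1; linarith
  have hl2L : l2 ≤ L := by rw [hL]; linarith
  have hl21 : 1 < l2 := by linarith
  obtain ⟨α, hαdef⟩ : ∃ x:ℝ, x = l + l1 - l2 - l * l1 + l * l2 + l1 * l2 := ⟨_, rfl⟩
  obtain ⟨D, hDdef⟩ : ∃ x:ℝ, x = α ^ 2 - 4 * l * l1 * l2 := ⟨_, rfl⟩
  obtain ⟨b2, hb2def⟩ : ∃ x:ℝ, x = (α + Real.sqrt D) / 2 := ⟨_, rfl⟩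
  obtain ⟨m, hmdef⟩ : ∃ x:ℝ, x = (l1 + l2)/2 := ⟨_, rfl⟩
  simp_rw [← hαdef, ← hDdef, ← hb2def]
  have hm1 : 1 < m := by rw [hmdef]; linarith
  have hmL : m ≤ L := by rw [hmdef, hL]; linarith
  have hm0 : 0 < m := by linarith
  have hα0 : 0 ≤ α := by rw [hαdef]; exact polyA h0 h1 h2 hl2 hl2l1
  have hD0 : 0 ≤ D := by
    have hεδ2' : ε ≤ s^2/(4*l*l1) := by rw [← hδ2def]; exact hεδ2
    have h4 := (le_div_iff₀ (by positivity : (0:ℝ) < 4*l*l1)).1 hεδ2'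
    rw [hεdef, hsdef] at h4
    rw [hDdef, hαdef]
    exact polyD h0 h1 h2 hl2 (by linarith)
  have hsqrtD : Real.sqrt D ≤ (D + s^2)/(2*s) := aux_sqrt_le D s hD0 hs0
  have hmb2 : cnum*ε/(2*s) ≤ m^2 - b2 := by
    have hpoly : 2*cnum*ε ≤ 4*s*m^2 - 2*s*α - (D + s^2) := by
      have hd1 : (1+(l+l1-1)^2)*ε ≤ 2*l1^2*(1-l) := by
        have hεδ1' : ε ≤ 2*l1^2*(1-l)/(1+(l+l1-1)^2) := by rw [← hδ1def]; exact hεδ1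
        have := (le_div_iff₀ (by positivity : (0:ℝ) < 1+(l+l1-1)^2)).1 hεδ1'
        linarith
      rw [hεdef] at hd1
      have := polyKey h0 h1 h2 hl2 hd1
      rw [← hαdef, ← hmdef, ← hsdef, ← hDdef, ← hcdef, ← hεdef] at this
      linarith
    have hb2le : b2 ≤ (α + (D + s^2)/(2*s))/2 := by
      rw [hb2def]; linarith
    have heq : (α + (D + s^2)/(2*s))/2 = (2*s*α + D + s^2)/(4*s) := by
      field_simp; ring
    have h7 : cnum*ε/(2*s) ≤ (4*s*m^2 - 2*s*α - (D+s^2))/(4*s) := by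
      rw [div_le_div_iff₀ (by positivity) (by positivity)]
      linarith [mul_le_mul_of_nonneg_right hpoly (by positivity : (0:ℝ) ≤ 2*s)]
    have h8 : (4*s*m^2 - 2*s*α - (D+s^2))/(4*s) = m^2 - (2*s*α + D + s^2)/(4*s) := by
      field_simp; ring
    rw [heq] at hb2le
    rw [h8] at h7
    linarith
  have hmb2' : 0 ≤ m^2 - b2 :=
    le_trans (le_of_lt (div_pos (mul_pos hcnum0 hε0) (by positivity))) hmb2
  have hb2nn : 0 ≤ b2 := by
    rw [hb2def]; positivity
  have hb2L : b2 ≤ L^2 := by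
    have hmL2 : m^2 ≤ L^2 := pow_le_pow_left₀ hm0.le hmL 2
    linarith
  -- G bounds
  obtain ⟨Gmin, hGmindef⟩ : ∃ x:ℝ, x = (l1^2-l^2)*((l1^2-1)*((l1+l1)*(l2+l1))) := ⟨_, rfl⟩
  have hgmGmin : gm ≤ Gmin := by
    rw [hGmindef, hgmdef]; exact polyGgm h0 h1 h2 hl2
  have hGmin0 : 0 < Gmin := lt_of_lt_of_le hgm0 hgmGmin
  have hsGmin : 0 < Real.sqrt Gmin := Real.sqrt_pos.2 hGmin0
  have hsgmGmin : Real.sqrt gm ≤ Real.sqrt Gmin := Real.sqrt_le_sqrt hgmGmin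
  obtain ⟨Gmax, hGmaxdef⟩ : ∃ x:ℝ, x = (l2^2-l^2)*((l2^2-1)*((l2+l1)*(l2+l2))) := ⟨_, rfl⟩
  have hGmaxgp : Gmax ≤ gp := by
    rw [hGmaxdef, hgpdef]; exact polyGgp h0 h1 h2 hl2 hl2l1
  have htele : Gmax - Gmin ≤ K*ε := by
    rw [hGmaxdef, hGmindef, hKdef, hεdef]
    exact polyGtele h0 h1 h2 hl2 hl2l1
  have hGlb : ∀ t:ℝ, l1 ≤ t → t ≤ l2 → Gmin ≤ (t^2-l^2)*((t^2-1)*((t+l1)*(l2+t))) := by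
    intro t ht1 ht2
    rw [hGmindef]; exact polyGlb h0 h1 h2 hl2 ht1 ht2
  have hGub : ∀ t:ℝ, l1 ≤ t → t ≤ l2 → (t^2-l^2)*((t^2-1)*((t+l1)*(l2+t))) ≤ Gmax := by
    intro t ht1 ht2
    rw [hGmaxdef]; exact polyGub h0 h1 h2 hl2 ht1 ht2
  obtain ⟨c', hc'def⟩ : ∃ x:ℝ, x = cnum*ε/(4*s*Real.sqrt gp) := ⟨_, rfl⟩
  have hc'0 : 0 < c' := by
    rw [hc'def]
    exact div_pos (mul_pos hcnum0 hε0) (mul_pos (mul_pos (by norm_num) hs0) hsgp)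
  have h363 : ε*(2*s*Real.sqrt gp*L*K) ≤ cnum*gm*Real.sqrt gm := by
    have hεδ3' : ε ≤ cnum*gm*Real.sqrt gm/(2*s*Real.sqrt gp*L*K) := by
      rw [← hδ3def]; exact hεδ3
    exact (le_div_iff₀ (by exact mul_pos (mul_pos (mul_pos (mul_pos two_pos hs0) hsgp) (by linarith)) hK0)).1 hεδ3'
  -- integrability
  have int_base : IntervalIntegrable (fun t => (Real.sqrt ((t-l1)*(l2-t)))⁻¹) volume l1 l2 :=
    aux_integrable_base l1 l2 hl2
  have int_F : IntervalIntegrable (fun t => (t ^ 2 - b2) /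
      Real.sqrt ((t ^ 2 - l ^ 2) * (t ^ 2 - 1) * (t ^ 2 - l1 ^ 2) * (l2 ^ 2 - t ^ 2)))
      volume l1 l2 := by
    apply aux_integrable_dom l1 l2 (2*L^2/Real.sqrt gm) hl2
    · apply Measurable.aestronglyMeasurable
      apply Measurable.div (by fun_prop)
      exact Real.continuous_sqrt.measurable.comp (by fun_prop)
    intro t ht
    rcases eq_or_lt_of_le ht.2 with rfl | htl2
    · have hz : (t ^ 2 - l ^ 2) * (t ^ 2 - 1) * (t ^ 2 - l1 ^ 2) * (t ^ 2 - t ^ 2) = 0 := by ring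
      have hz2 : (t - l1) * (t - t) = 0 := by ring
      rw [hz, hz2, Real.sqrt_zero, div_zero, abs_zero, inv_zero, mul_zero]
    have ht1 : l1 < t := ht.1
    have hPt : 0 < (t-l1)*(l2-t) := mul_pos (by linarith) (by linarith)
    have hsPt : 0 < Real.sqrt ((t-l1)*(l2-t)) := Real.sqrt_pos.2 hPt
    have hGt := hGlb t ht1.le htl2.le
    have hGt0 : 0 < (t^2-l^2)*((t^2-1)*((t+l1)*(l2+t))) := lt_of_lt_of_le hGmin0 hGt
    have hsGt : 0 < Real.sqrt ((t^2-l^2)*((t^2-1)*((t+l1)*(l2+t)))) := Real.sqrt_pos.2 hGt0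
    have hquart : (t ^ 2 - l ^ 2) * (t ^ 2 - 1) * (t ^ 2 - l1 ^ 2) * (l2 ^ 2 - t ^ 2)
        = ((t^2-l^2)*((t^2-1)*((t+l1)*(l2+t)))) * ((t-l1)*(l2-t)) := by ring
    rw [hquart, Real.sqrt_mul hGt0.le, abs_div,
      abs_of_nonneg (mul_nonneg (Real.sqrt_nonneg _) (Real.sqrt_nonneg _))]
    have ht0 : 0 < t := by linarith
    have htL : t ≤ L := by linarith
    have htL2 : t^2 ≤ L^2 := pow_le_pow_left₀ ht0.le htL 2
    have ht2nn : (0:ℝ) ≤ t^2 := sq_nonneg t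
    have hnum : |t^2 - b2| ≤ 2*L^2 := by
      rw [abs_le]; constructor <;> [linarith; linarith]
    have hd1 : Real.sqrt gm * Real.sqrt ((t-l1)*(l2-t))
        ≤ Real.sqrt ((t^2-l^2)*((t^2-1)*((t+l1)*(l2+t)))) * Real.sqrt ((t-l1)*(l2-t)) := by
      apply mul_le_mul_of_nonneg_right _ (Real.sqrt_nonneg _)
      exact le_trans hsgmGmin (Real.sqrt_le_sqrt hGt)
    refine le_trans (div_le_div₀ (by positivity) hnum (by positivity) hd1) ?_
    rw [div_mul_eq_div_div, div_eq_mul_inv (2*L^2/Real.sqrt gm)]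
  have hsne : s ≠ 0 := ne_of_gt hs0
  have hsgpne : Real.sqrt gp ≠ 0 := ne_of_gt hsgp
  have hm2L : m^2 ≤ L^2 := pow_le_pow_left₀ hm0.le hmL 2
  have int_g : IntervalIntegrable (fun t => ((t^2 - m^2)/Real.sqrt Gmin + c')/Real.sqrt ((t-l1)*(l2-t)))
      volume l1 l2 := by
    apply aux_integrable_dom l1 l2 (2*L^2/Real.sqrt gm + c') hl2
    · apply Measurable.aestronglyMeasurable
      apply Measurable.div _ (Real.continuous_sqrt.measurable.comp (by fun_prop))
      exact ((by fun_prop : Measurable (fun t:ℝ => t^2 - m^2)).div_const _).add_const c'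
    intro t ht
    rcases eq_or_lt_of_le ht.2 with rfl | htl2
    · rw [show (t-l1)*(t-t) = 0 by ring, Real.sqrt_zero, div_zero, abs_zero, inv_zero, mul_zero]
    have ht1 : l1 < t := ht.1
    have hPt : 0 < (t-l1)*(l2-t) := mul_pos (by linarith only [ht1]) (by linarith only [htl2])
    have hsPt : 0 < Real.sqrt ((t-l1)*(l2-t)) := Real.sqrt_pos.2 hPt
    have ht0 : 0 < t := by linarith only [ht1, h2]
    have htL : t ≤ L := by linarith only [htl2, hl2L]
    have htL2 : t^2 ≤ L^2 := pow_le_pow_left₀ ht0.le htL 2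
    have ht2nn : (0:ℝ) ≤ t^2 := sq_nonneg t
    have hm2nn : (0:ℝ) ≤ m^2 := sq_nonneg m
    have hX : |(t^2-m^2)/Real.sqrt Gmin| ≤ 2*L^2/Real.sqrt gm := by
      rw [abs_div, abs_of_nonneg (Real.sqrt_nonneg _)]
      apply div_le_div₀ (by positivity) _ hsgm hsgmGmin
      rw [abs_le]; constructor <;> [linarith; linarith]
    have numab : |(t^2-m^2)/Real.sqrt Gmin + c'| ≤ 2*L^2/Real.sqrt gm + c' := by
      refine le_trans (abs_add_le _ _) ?_
      rw [abs_of_pos hc'0]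
      linarith
    rw [abs_div, abs_of_nonneg (Real.sqrt_nonneg _), ← div_eq_mul_inv]
    exact (div_le_div_iff_of_pos_right hsPt).2 numab
  have int_A : IntervalIntegrable (fun t => (t^2 - m^2)/Real.sqrt ((t-l1)*(l2-t))) volume l1 l2 := by
    apply aux_integrable_dom l1 l2 (2*L^2) hl2
    · apply Measurable.aestronglyMeasurable
      exact (by fun_prop : Measurable (fun t:ℝ => t^2 - m^2)).div
        (Real.continuous_sqrt.measurable.comp (by fun_prop))
    intro t ht
    rcases eq_or_lt_of_le ht.2 with rfl | htl2
    · rw [show (t-l1)*(t-t) = 0 by ring, Real.sqrt_zero, div_zero, abs_zero, inv_zero, mul_zero]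
    have ht1 : l1 < t := ht.1
    have hPt : 0 < (t-l1)*(l2-t) := mul_pos (by linarith only [ht1]) (by linarith only [htl2])
    have hsPt : 0 < Real.sqrt ((t-l1)*(l2-t)) := Real.sqrt_pos.2 hPt
    have ht0 : 0 < t := by linarith only [ht1, h2]
    have htL : t ≤ L := by linarith only [htl2, hl2L]
    have htL2 : t^2 ≤ L^2 := pow_le_pow_left₀ ht0.le htL 2
    have ht2nn : (0:ℝ) ≤ t^2 := sq_nonneg t
    have hm2nn : (0:ℝ) ≤ m^2 := sq_nonneg m
    rw [abs_div, abs_of_nonneg (Real.sqrt_nonneg _), ← div_eq_mul_inv]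
    apply (div_le_div_iff_of_pos_right hsPt).2
    rw [abs_le]; constructor <;> [linarith; linarith]
  have int_lin : IntervalIntegrable (fun t => (t - m)/Real.sqrt ((t-l1)*(l2-t))) volume l1 l2 := by
    apply aux_integrable_dom l1 l2 1 hl2
    · apply Measurable.aestronglyMeasurable
      exact (by fun_prop : Measurable (fun t:ℝ => t - m)).div
        (Real.continuous_sqrt.measurable.comp (by fun_prop))
    intro t ht
    rcases eq_or_lt_of_le ht.2 with rfl | htl2
    · rw [show (t-l1)*(t-t) = 0 by ring, Real.sqrt_zero, div_zero, abs_zero, inv_zero, mul_zero]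
    have ht1 : l1 < t := ht.1
    have hPt : 0 < (t-l1)*(l2-t) := mul_pos (by linarith only [ht1]) (by linarith only [htl2])
    have hsPt : 0 < Real.sqrt ((t-l1)*(l2-t)) := Real.sqrt_pos.2 hPt
    rw [abs_div, abs_of_nonneg (Real.sqrt_nonneg _), one_mul, ← one_div]
    apply (div_le_div_iff_of_pos_right hsPt).2
    rw [abs_le]; constructor <;> [linarith; linarith]
  have int_sq : IntervalIntegrable (fun t => (t - m)^2/Real.sqrt ((t-l1)*(l2-t))) volume l1 l2 := by
    apply aux_integrable_dom l1 l2 1 hl2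
    · apply Measurable.aestronglyMeasurable
      exact (by fun_prop : Measurable (fun t:ℝ => (t - m)^2)).div
        (Real.continuous_sqrt.measurable.comp (by fun_prop))
    intro t ht
    rcases eq_or_lt_of_le ht.2 with rfl | htl2
    · rw [show (t-l1)*(t-t) = 0 by ring, Real.sqrt_zero, div_zero, abs_zero, inv_zero, mul_zero]
    have ht1 : l1 < t := ht.1
    have hPt : 0 < (t-l1)*(l2-t) := mul_pos (by linarith only [ht1]) (by linarith only [htl2])
    have hsPt : 0 < Real.sqrt ((t-l1)*(l2-t)) := Real.sqrt_pos.2 hPt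
    have hsq : (t-m)^2 ≤ 1 := by
      have h12 : (t-m)^2 ≤ 1^2 := sq_le_sq' (by linarith only [ht1, hmdef, hεdef, hε1, htl2])
        (by linarith only [ht1, hmdef, hεdef, hε1, htl2])
      linarith only [h12]
    rw [abs_div, abs_of_nonneg (Real.sqrt_nonneg _), one_mul, ← one_div,
      abs_of_nonneg (sq_nonneg (t-m))]
    exact (div_le_div_iff_of_pos_right hsPt).2 hsq
  -- integral identities
  have hodd : (∫ t in l1..l2, (t - m)/Real.sqrt ((t-l1)*(l2-t))) = 0 := by
    rw [hmdef]; exact aux_integral_odd l1 l2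
  have hA : 0 ≤ ∫ t in l1..l2, (t^2-m^2)/Real.sqrt ((t-l1)*(l2-t)) := by
    have hsplit : (fun t:ℝ => (t^2-m^2)/Real.sqrt ((t-l1)*(l2-t)))
        = fun t => (t-m)^2/Real.sqrt ((t-l1)*(l2-t)) + (2*m)*((t-m)/Real.sqrt ((t-l1)*(l2-t))) := by
      funext t; ring
    rw [hsplit, integral_add int_sq (int_lin.const_mul (2*m)), intervalIntegral.integral_const_mul, hodd,
      mul_zero, add_zero]
    apply intervalIntegral.integral_nonneg hl2.le
    intro u hu
    positivity
  have hB : 0 < ∫ t in l1..l2, (Real.sqrt ((t-l1)*(l2-t)))⁻¹ := by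
    apply intervalIntegral_pos_of_pos_on int_base _ hl2
    intro x hx
    have hx0 : 0 < (x-l1)*(l2-x) := mul_pos (by linarith only [hx.1]) (by linarith only [hx.2])
    exact inv_pos.2 (Real.sqrt_pos.2 hx0)
  have hIg : 0 < ∫ t in l1..l2, ((t^2 - m^2)/Real.sqrt Gmin + c')/Real.sqrt ((t-l1)*(l2-t)) := by
    have hgsplit : (fun t:ℝ => ((t^2 - m^2)/Real.sqrt Gmin + c')/Real.sqrt ((t-l1)*(l2-t)))
        = fun t => (Real.sqrt Gmin)⁻¹*((t^2-m^2)/Real.sqrt ((t-l1)*(l2-t)))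
          + c'*(Real.sqrt ((t-l1)*(l2-t)))⁻¹ := by
      funext t; ring
    rw [hgsplit, integral_add (int_A.const_mul _) (int_base.const_mul _), intervalIntegral.integral_const_mul,
      intervalIntegral.integral_const_mul]
    have h1 : 0 ≤ (Real.sqrt Gmin)⁻¹ * ∫ t in l1..l2, (t^2-m^2)/Real.sqrt ((t-l1)*(l2-t)) :=
      mul_nonneg (inv_nonneg.2 (Real.sqrt_nonneg _)) hA
    have h2 : 0 < c' * ∫ t in l1..l2, (Real.sqrt ((t-l1)*(l2-t)))⁻¹ := mul_pos hc'0 hB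
    linarith only [h1, h2]
  -- pointwise inequality
  have hpt : ∀ t ∈ Icc l1 l2, ((t^2 - m^2)/Real.sqrt Gmin + c')/Real.sqrt ((t-l1)*(l2-t))
      ≤ (t ^ 2 - b2) / Real.sqrt ((t ^ 2 - l ^ 2) * (t ^ 2 - 1) * (t ^ 2 - l1 ^ 2) * (l2 ^ 2 - t ^ 2)) := by
    intro t ht
    rcases eq_or_lt_of_le ht.1 with rfl | ht1
    · rw [show (l1-l1)*(l2-l1) = 0 by ring,
        show (l1^2-l^2)*(l1^2-1)*(l1^2-l1^2)*(l2^2-l1^2) = 0 by ring,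
        Real.sqrt_zero, div_zero, div_zero]
    rcases eq_or_lt_of_le ht.2 with rfl | ht2
    · rw [show (t-l1)*(t-t) = 0 by ring,
        show (t^2-l^2)*(t^2-1)*(t^2-l1^2)*(t^2-t^2) = 0 by ring,
        Real.sqrt_zero, div_zero, div_zero]
    have hPt : 0 < (t-l1)*(l2-t) := mul_pos (by linarith only [ht1]) (by linarith only [ht2])
    have hsPt : 0 < Real.sqrt ((t-l1)*(l2-t)) := Real.sqrt_pos.2 hPt
    have hGt := hGlb t ht1.le ht2.le
    have hGtub := hGub t ht1.le ht2.le
    have hGt0 : 0 < (t^2-l^2)*((t^2-1)*((t+l1)*(l2+t))) := lt_of_lt_of_le hGmin0 hGt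
    have hsGt : 0 < Real.sqrt ((t^2-l^2)*((t^2-1)*((t+l1)*(l2+t)))) := Real.sqrt_pos.2 hGt0
    have hsGtle : Real.sqrt ((t^2-l^2)*((t^2-1)*((t+l1)*(l2+t)))) ≤ Real.sqrt gp :=
      Real.sqrt_le_sqrt (le_trans hGtub hGmaxgp)
    have hsGminle : Real.sqrt Gmin ≤ Real.sqrt ((t^2-l^2)*((t^2-1)*((t+l1)*(l2+t)))) :=
      Real.sqrt_le_sqrt hGt
    have ht0 : 0 < t := by linarith only [ht1, h2]
    have hdinv : 1/Real.sqrt Gmin - 1/Real.sqrt ((t^2-l^2)*((t^2-1)*((t+l1)*(l2+t))))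
        ≤ K*ε/(2*gm*Real.sqrt gm) := by
      refine le_trans (aux_inv_sqrt_diff Gmin _ hGmin0 hGt) ?_
      apply div_le_div₀ (by positivity) (by linarith only [htele, hGtub]) (by positivity)
      apply mul_le_mul (by linarith only [hgmGmin]) hsgmGmin (Real.sqrt_nonneg _)
        (by linarith only [hGmin0])
    have hdinv0 : 0 ≤ 1/Real.sqrt Gmin - 1/Real.sqrt ((t^2-l^2)*((t^2-1)*((t+l1)*(l2+t)))) := by
      have := one_div_le_one_div_of_le hsGmin hsGminle
      linarith only [this]
    have hL1 : (t^2-m^2)*(1/Real.sqrt Gmin - 1/Real.sqrt ((t^2-l^2)*((t^2-1)*((t+l1)*(l2+t))))) ≤ c' := by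
      rcases le_or_gt (t^2) (m^2) with hcs | hcs
      · exact le_trans (mul_nonpos_iff.2 (Or.inr ⟨by linarith only [hcs], hdinv0⟩)) hc'0.le
      · have hq1 : t - m ≤ ε/2 := by linarith only [hmdef, hεdef, ht2]
        have hq2 : t + m ≤ 2*L := by linarith only [ht2, hl2L, hmL]
        have hq3 : m ≤ t := by
          by_contra hcon
          push_neg at hcon
          exact absurd hcs (not_lt.2 (pow_le_pow_left₀ ht0.le hcon.le 2))
        have hb : (t+m)*(t-m) ≤ (2*L)*(ε/2) :=
          mul_le_mul hq2 hq1 (by linarith only [hq3]) (by linarith only [hL2])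
        have hid2 : t^2 - m^2 = (t+m)*(t-m) := by ring
        have hLe : t^2 - m^2 ≤ L*ε := by linarith only [hb, hid2]
        have hmul : (t^2-m^2)*(1/Real.sqrt Gmin - 1/Real.sqrt ((t^2-l^2)*((t^2-1)*((t+l1)*(l2+t)))))
            ≤ (L*ε)*(K*ε/(2*gm*Real.sqrt gm)) :=
          mul_le_mul hLe hdinv hdinv0 (by positivity)
        refine le_trans hmul ?_
        rw [hc'def, show (L*ε)*(K*ε/(2*gm*Real.sqrt gm)) = (L*K*ε*ε)/(2*gm*Real.sqrt gm) by ring,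
          div_le_div_iff₀ (by positivity) (by positivity)]
        linarith only [mul_le_mul_of_nonneg_right h363 (by positivity : (0:ℝ) ≤ 2*ε)]
    have hrhs : 2*c' ≤ (m^2 - b2)/Real.sqrt ((t^2-l^2)*((t^2-1)*((t+l1)*(l2+t)))) := by
      have hh1 : (cnum*ε/(2*s))/Real.sqrt gp
          ≤ (m^2-b2)/Real.sqrt ((t^2-l^2)*((t^2-1)*((t+l1)*(l2+t)))) :=
        div_le_div₀ hmb2' hmb2 hsGt hsGtle
      have hh2 : 2*c' = (cnum*ε/(2*s))/Real.sqrt gp := by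
        rw [hc'def]; field_simp; ring
      linarith only [hh1, hh2]
    have key1 : (t^2-b2)/Real.sqrt ((t^2-l^2)*((t^2-1)*((t+l1)*(l2+t))))
        = (t^2-m^2)/Real.sqrt ((t^2-l^2)*((t^2-1)*((t+l1)*(l2+t))))
          + (m^2-b2)/Real.sqrt ((t^2-l^2)*((t^2-1)*((t+l1)*(l2+t)))) := by
      rw [← add_div]; congr 1; ring
    have key2 : (t^2-m^2)/Real.sqrt Gmin - (t^2-m^2)/Real.sqrt ((t^2-l^2)*((t^2-1)*((t+l1)*(l2+t))))
        = (t^2-m^2)*(1/Real.sqrt Gmin - 1/Real.sqrt ((t^2-l^2)*((t^2-1)*((t+l1)*(l2+t))))) := by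
      ring
    have core : (t^2-m^2)/Real.sqrt Gmin + c'
        ≤ (t^2-b2)/Real.sqrt ((t^2-l^2)*((t^2-1)*((t+l1)*(l2+t)))) := by
      linarith only [key1, key2, hL1, hrhs, hc'0]
    rw [show (t^2-l^2)*(t^2-1)*(t^2-l1^2)*(l2^2-t^2)
        = ((t^2-l^2)*((t^2-1)*((t+l1)*(l2+t)))) * ((t-l1)*(l2-t)) by ring,
      Real.sqrt_mul hGt0.le, ← div_div]
    exact (div_le_div_iff_of_pos_right hsPt).2 core
  exact lt_of_lt_of_le hIg (integral_mono_on hl2.le int_g int_F hpt)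
end

section
/- Fix real numbers λ and λ₁ with 0 < λ < 1 < λ₁. Then there exists N > λ₁ such that for every λ₂ > N, the improper integral ξ₂(λ₁, λ₂) = ∫_{λ₁}^{λ₂} (t² − b²)/√((t² − λ²)(t² − 1)(t² − λ₁²)(λ₂² − t²)) dt is strictly negative, where b = √((α + √(α² − 4λλ₁λ₂))/2) and α = λ + λ₁ − λ₂ − λλ₁ + λλ₂ + λ₁λ₂. -/
lemma helper_div_sqrt_le {num P κ : ℝ} (hn : 0 ≤ num) (hκ : 0 ≤ κ)
    (h : num ^ 2 ≤ κ ^ 2 * P) : num / Real.sqrt P ≤ κ := by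
  rcases le_or_gt P 0 with hP | hP
  · rw [Real.sqrt_eq_zero'.mpr hP, div_zero]; exact hκ
  · rw [div_le_iff₀ (Real.sqrt_pos.mpr hP)]
    calc num = Real.sqrt (num ^ 2) := (Real.sqrt_sq hn).symm
      _ ≤ Real.sqrt (κ ^ 2 * P) := Real.sqrt_le_sqrt h
      _ = κ * Real.sqrt P := by rw [Real.sqrt_mul (sq_nonneg κ), Real.sqrt_sq hκ]

lemma helper_le_div_sqrt {num P κ : ℝ} (hn : 0 ≤ num) (hκ : 0 ≤ κ)
    (hP : 0 < P) (h : κ ^ 2 * P ≤ num ^ 2) : κ ≤ num / Real.sqrt P := by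
  rw [le_div_iff₀ (Real.sqrt_pos.mpr hP)]
  calc κ * Real.sqrt P = Real.sqrt (κ ^ 2 * P) := by
        rw [Real.sqrt_mul (sq_nonneg κ), Real.sqrt_sq hκ]
    _ ≤ Real.sqrt (num ^ 2) := Real.sqrt_le_sqrt h
    _ = num := Real.sqrt_sq hn

lemma helper_div_le_div {a b c : ℝ} (h : a ≤ b) (hc : 0 ≤ c) : a / c ≤ b / c := by
  rcases hc.eq_or_lt with rfl | hc
  · simp
  · exact (div_le_div_iff_of_pos_right hc).mpr h

lemma helper_rpow_sq {x : ℝ} (hx : 0 < x) : (x ^ (-(1/2) : ℝ)) ^ 2 = x⁻¹ := by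
  rw [sq, ← Real.rpow_add hx]
  norm_num [Real.rpow_neg_one]


section aux
variable {l l1 l2 t : ℝ}

lemma aux_facts (h0 : 0 < l) (h1 : l < 1) (h2 : 1 < l1) (ht1 : l1 ≤ t) (ht2 : t ≤ l2) :
    (l1 ^ 2 - 1) / l1 ^ 2 * t ^ 2 ≤ t ^ 2 - 1 ∧ (l1 ^ 2 - 1) / l1 ^ 2 * t ^ 2 ≤ t ^ 2 - l ^ 2 ∧
      0 ≤ t ^ 2 - l1 ^ 2 ∧ 0 ≤ l2 ^ 2 - t ^ 2 ∧ l1 ≤ t := by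
  have hl1 : (0:ℝ) < l1 := by linarith
  have ht2sq : l1 ^ 2 ≤ t ^ 2 := by nlinarith
  have htl2 : t ^ 2 ≤ l2 ^ 2 := by nlinarith
  have hct : (l1 ^ 2 - 1) / l1 ^ 2 * t ^ 2 ≤ t ^ 2 - 1 := by
    have he : (l1 ^ 2 - 1) / l1 ^ 2 * t ^ 2 - (t ^ 2 - 1) = (l1 ^ 2 - t ^ 2) / l1 ^ 2 := by
      field_simp; ring
    have h2' : (l1 ^ 2 - t ^ 2) / l1 ^ 2 ≤ 0 :=
      div_nonpos_of_nonpos_of_nonneg (by linarith) (by positivity)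
    linarith
  exact ⟨hct, by nlinarith, by nlinarith, by linarith, ht1⟩

lemma aux_Plow (h0 : 0 < l) (h1 : l < 1) (h2 : 1 < l1) (ht1 : l1 ≤ t) (ht2 : t ≤ l2) :
    2 * (l1 ^ 2 - l ^ 2) * (l1 ^ 2 - 1) * ((t - l1) * (l2 - t)) ≤
      (t ^ 2 - l ^ 2) * (t ^ 2 - 1) * (t ^ 2 - l1 ^ 2) * (l2 ^ 2 - t ^ 2) := by
  have hl1 : (0:ℝ) < l1 := by linarith
  have ht2sq : l1 ^ 2 ≤ t ^ 2 := by nlinarith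
  have f1 : l1 ^ 2 - l ^ 2 ≤ t ^ 2 - l ^ 2 := by linarith
  have f2 : l1 ^ 2 - 1 ≤ t ^ 2 - 1 := by linarith
  have f3 : 2 * (t - l1) ≤ t ^ 2 - l1 ^ 2 := by nlinarith
  have f4 : l2 - t ≤ l2 ^ 2 - t ^ 2 := by nlinarith
  have n1 : (0:ℝ) ≤ l1 ^ 2 - 1 := by nlinarith
  have n2 : (0:ℝ) ≤ t ^ 2 - l ^ 2 := by nlinarith
  have n3 : (0:ℝ) ≤ 2 * (t - l1) := by linarith
  have n4 : (0:ℝ) ≤ (t ^ 2 - l ^ 2) * (t ^ 2 - 1) := by nlinarith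
  have n5 : (0:ℝ) ≤ l2 - t := by linarith
  have n6 : (0:ℝ) ≤ (t ^ 2 - l ^ 2) * (t ^ 2 - 1) * (t ^ 2 - l1 ^ 2) := by
    apply mul_nonneg n4; linarith
  have p1 : (l1 ^ 2 - l ^ 2) * (l1 ^ 2 - 1) ≤ (t ^ 2 - l ^ 2) * (t ^ 2 - 1) :=
    mul_le_mul f1 f2 n1 n2
  have p2 : (l1 ^ 2 - l ^ 2) * (l1 ^ 2 - 1) * (2 * (t - l1)) ≤
      (t ^ 2 - l ^ 2) * (t ^ 2 - 1) * (t ^ 2 - l1 ^ 2) :=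
    mul_le_mul p1 f3 n3 n4
  have p3 : (l1 ^ 2 - l ^ 2) * (l1 ^ 2 - 1) * (2 * (t - l1)) * (l2 - t) ≤
      (t ^ 2 - l ^ 2) * (t ^ 2 - 1) * (t ^ 2 - l1 ^ 2) * (l2 ^ 2 - t ^ 2) :=
    mul_le_mul p2 f4 n5 n6
  calc 2 * (l1 ^ 2 - l ^ 2) * (l1 ^ 2 - 1) * ((t - l1) * (l2 - t))
      = (l1 ^ 2 - l ^ 2) * (l1 ^ 2 - 1) * (2 * (t - l1)) * (l2 - t) := by ring
    _ ≤ _ := p3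

lemma aux_wbound (h0 : 0 < l) (h1 : l < 1) (h2 : 1 < l1) (hgap : l1 + 2 < l2)
    (ht1 : l1 < t) (ht2 : t ≤ l2) :
    (Real.sqrt ((t ^ 2 - l ^ 2) * (t ^ 2 - 1) * (t ^ 2 - l1 ^ 2) * (l2 ^ 2 - t ^ 2)))⁻¹ ≤
      (Real.sqrt (2 * (l1 ^ 2 - l ^ 2) * (l1 ^ 2 - 1)))⁻¹ * (t - l1) ^ (-(1/2) : ℝ) +
      (Real.sqrt (2 * (l1 ^ 2 - l ^ 2) * (l1 ^ 2 - 1)))⁻¹ * (l2 - t) ^ (-(1/2) : ℝ) := by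
  set M : ℝ := 2 * (l1 ^ 2 - l ^ 2) * (l1 ^ 2 - 1) with hM_def
  have hM : 0 < M := by
    have e1 : l ^ 2 < 1 := by nlinarith
    have e2 : 1 < l1 ^ 2 := by nlinarith
    rw [hM_def]; nlinarith
  set C0 : ℝ := (Real.sqrt M)⁻¹ with hC0_def
  have hC0 : 0 < C0 := by rw [hC0_def]; positivity
  have hC0sq : C0 ^ 2 = M⁻¹ := by rw [hC0_def, inv_pow, Real.sq_sqrt hM.le]
  clear_value M C0
  by_cases hte : t = l2
  · have hz : l2 ^ 2 - t ^ 2 = 0 := by rw [hte]; ring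
    rw [hz, mul_zero, Real.sqrt_zero, inv_zero]
    have r1 : (0:ℝ) ≤ C0 * (t - l1) ^ (-(1/2) : ℝ) :=
      mul_nonneg hC0.le (Real.rpow_nonneg (by linarith) _)
    have r2 : (0:ℝ) ≤ C0 * (l2 - t) ^ (-(1/2) : ℝ) :=
      mul_nonneg hC0.le (Real.rpow_nonneg (by linarith [hte.ge]) _)
    linarith
  · have htl2 : t < l2 := lt_of_le_of_ne ht2 hte
    have hPlow := aux_Plow h0 h1 h2 ht1.le ht2
    rcases le_or_gt t ((l1 + l2) / 2) with hmid | hmid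
    · have h1' : (1:ℝ) ≤ l2 - t := by linarith
      have keyb : (Real.sqrt ((t ^ 2 - l ^ 2) * (t ^ 2 - 1) * (t ^ 2 - l1 ^ 2) * (l2 ^ 2 - t ^ 2)))⁻¹
          ≤ C0 * (t - l1) ^ (-(1/2) : ℝ) := by
        rw [← one_div]
        apply helper_div_sqrt_le zero_le_one
          (mul_nonneg hC0.le (Real.rpow_nonneg (by linarith) _))
        rw [mul_pow, hC0sq, helper_rpow_sq (by linarith : (0:ℝ) < t - l1)]
        have hMt : 0 < M * (t - l1) := by
          apply mul_pos hM; linarith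
        rw [show M⁻¹ * (t - l1)⁻¹ *
            ((t ^ 2 - l ^ 2) * (t ^ 2 - 1) * (t ^ 2 - l1 ^ 2) * (l2 ^ 2 - t ^ 2)) =
            ((t ^ 2 - l ^ 2) * (t ^ 2 - 1) * (t ^ 2 - l1 ^ 2) * (l2 ^ 2 - t ^ 2)) / (M * (t - l1))
          from by rw [div_eq_mul_inv, mul_inv]; ring]
        rw [one_pow, one_le_div hMt]
        have hPlow' : M * ((t - l1) * (l2 - t)) ≤
            (t ^ 2 - l ^ 2) * (t ^ 2 - 1) * (t ^ 2 - l1 ^ 2) * (l2 ^ 2 - t ^ 2) := by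
          rw [hM_def]
          exact hPlow
        calc M * (t - l1) = M * (t - l1) * 1 := by ring
          _ ≤ M * (t - l1) * (l2 - t) :=
              mul_le_mul_of_nonneg_left h1' (mul_nonneg hM.le (by linarith))
          _ = M * ((t - l1) * (l2 - t)) := by ring
          _ ≤ _ := hPlow'
      have r2 : (0:ℝ) ≤ C0 * (l2 - t) ^ (-(1/2) : ℝ) :=
        mul_nonneg hC0.le (Real.rpow_nonneg (by linarith) _)
      linarith
    · have h1' : (1:ℝ) ≤ t - l1 := by linarith
      have keyb : (Real.sqrt ((t ^ 2 - l ^ 2) * (t ^ 2 - 1) * (t ^ 2 - l1 ^ 2) * (l2 ^ 2 - t ^ 2)))⁻¹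
          ≤ C0 * (l2 - t) ^ (-(1/2) : ℝ) := by
        rw [← one_div]
        apply helper_div_sqrt_le zero_le_one
          (mul_nonneg hC0.le (Real.rpow_nonneg (by linarith) _))
        rw [mul_pow, hC0sq, helper_rpow_sq (by linarith : (0:ℝ) < l2 - t)]
        have hMt : 0 < M * (l2 - t) := by
          apply mul_pos hM; linarith
        rw [show M⁻¹ * (l2 - t)⁻¹ *
            ((t ^ 2 - l ^ 2) * (t ^ 2 - 1) * (t ^ 2 - l1 ^ 2) * (l2 ^ 2 - t ^ 2)) =
            ((t ^ 2 - l ^ 2) * (t ^ 2 - 1) * (t ^ 2 - l1 ^ 2) * (l2 ^ 2 - t ^ 2)) / (M * (l2 - t))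
          from by rw [div_eq_mul_inv, mul_inv]; ring]
        rw [one_pow, one_le_div hMt]
        have hPlow' : M * ((t - l1) * (l2 - t)) ≤
            (t ^ 2 - l ^ 2) * (t ^ 2 - 1) * (t ^ 2 - l1 ^ 2) * (l2 ^ 2 - t ^ 2) := by
          rw [hM_def]
          exact hPlow
        calc M * (l2 - t) = M * (l2 - t) * 1 := by ring
          _ ≤ M * (l2 - t) * (t - l1) :=
              mul_le_mul_of_nonneg_left h1' (mul_nonneg hM.le (by linarith))
          _ = M * ((t - l1) * (l2 - t)) := by ring
          _ ≤ _ := hPlow'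
      have r1 : (0:ℝ) ≤ C0 * (t - l1) ^ (-(1/2) : ℝ) :=
        mul_nonneg hC0.le (Real.rpow_nonneg (by linarith) _)
      linarith

lemma aux_wlow (h0 : 0 < l) (h1 : l < 1) (h2 : 1 < l1) (hgap : l1 + 2 < l2)
    (ht1 : l1 + 1 ≤ t) (ht2 : t ≤ l1 + 2) :
    ((l1 + 2) ^ 3 * l2)⁻¹ ≤
      (Real.sqrt ((t ^ 2 - l ^ 2) * (t ^ 2 - 1) * (t ^ 2 - l1 ^ 2) * (l2 ^ 2 - t ^ 2)))⁻¹ := by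
  have hl1 : (0:ℝ) < l1 := by linarith
  have hl2 : (0:ℝ) < l2 := by linarith
  have htpos : (0:ℝ) < t := by linarith
  have a1 : (0:ℝ) < t ^ 2 - l ^ 2 := by nlinarith
  have a2 : (0:ℝ) < t ^ 2 - 1 := by nlinarith
  have a3 : (0:ℝ) < t ^ 2 - l1 ^ 2 := by nlinarith
  have a4 : (0:ℝ) < l2 ^ 2 - t ^ 2 := by nlinarith
  have hP : 0 < (t ^ 2 - l ^ 2) * (t ^ 2 - 1) * (t ^ 2 - l1 ^ 2) * (l2 ^ 2 - t ^ 2) := by positivity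
  rw [inv_eq_one_div (Real.sqrt _)]
  apply helper_le_div_sqrt zero_le_one (by positivity) hP
  rw [one_pow]
  have b1 : t ^ 2 ≤ (l1 + 2) ^ 2 := by nlinarith
  have p1 : (t ^ 2 - l ^ 2) * (t ^ 2 - 1) ≤ (l1 + 2) ^ 2 * (l1 + 2) ^ 2 :=
    mul_le_mul (by nlinarith) (by nlinarith) a2.le (by positivity)
  have p2 : (t ^ 2 - l ^ 2) * (t ^ 2 - 1) * (t ^ 2 - l1 ^ 2) ≤
      (l1 + 2) ^ 2 * (l1 + 2) ^ 2 * (l1 + 2) ^ 2 :=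
    mul_le_mul p1 (by nlinarith) a3.le (by positivity)
  have p3 : (t ^ 2 - l ^ 2) * (t ^ 2 - 1) * (t ^ 2 - l1 ^ 2) * (l2 ^ 2 - t ^ 2) ≤
      (l1 + 2) ^ 2 * (l1 + 2) ^ 2 * (l1 + 2) ^ 2 * l2 ^ 2 :=
    mul_le_mul p2 (by nlinarith) a4.le (by positivity)
  calc (((l1 + 2) ^ 3 * l2)⁻¹) ^ 2 *
        ((t ^ 2 - l ^ 2) * (t ^ 2 - 1) * (t ^ 2 - l1 ^ 2) * (l2 ^ 2 - t ^ 2))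
      ≤ (((l1 + 2) ^ 3 * l2)⁻¹) ^ 2 * (((l1 + 2) ^ 3 * l2) ^ 2) := by
        apply mul_le_mul_of_nonneg_left _ (by positivity)
        calc (t ^ 2 - l ^ 2) * (t ^ 2 - 1) * (t ^ 2 - l1 ^ 2) * (l2 ^ 2 - t ^ 2)
            ≤ (l1 + 2) ^ 2 * (l1 + 2) ^ 2 * (l1 + 2) ^ 2 * l2 ^ 2 := p3
          _ = ((l1 + 2) ^ 3 * l2) ^ 2 := by ring
    _ = 1 := by
        have : ((l1 + 2) ^ 3 * l2) ≠ 0 := by positivity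
        field_simp

lemma aux_g1 {T : ℝ} (h0 : 0 < l) (h1 : l < 1) (h2 : 1 < l1)
    (ht1 : l1 ≤ t) (htT : t ≤ T) (hT2 : 2 * T < l2) :
    (t ^ 2 - l1 ^ 2) /
        Real.sqrt ((t ^ 2 - l ^ 2) * (t ^ 2 - 1) * (t ^ 2 - l1 ^ 2) * (l2 ^ 2 - t ^ 2)) ≤
      2 / ((l1 ^ 2 - 1) / l1 ^ 2 * l2) := by
  have hl1 : (0:ℝ) < l1 := by linarith
  have htpos : (0:ℝ) < t := by linarith
  have hl2 : (0:ℝ) < l2 := by linarith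
  have hsq : (0:ℝ) < l1 ^ 2 - 1 := by nlinarith
  have hcpos : (0:ℝ) < (l1 ^ 2 - 1) / l1 ^ 2 := by positivity
  set c := (l1 ^ 2 - 1) / l1 ^ 2 with hc_def
  have htl2 : t ≤ l2 := by linarith
  obtain ⟨hf1, hf2, hnum, hl2t, -⟩ := aux_facts h0 h1 h2 ht1 htl2
  apply helper_div_sqrt_le hnum (by positivity)
  rw [div_pow, div_mul_eq_mul_div, le_div_iff₀ (by positivity : (0:ℝ) < (c * l2) ^ 2)]
  have h0f : (0:ℝ) < c * t ^ 2 := by positivity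
  have e1 : c * t ^ 2 * (c * t ^ 2) ≤ (t ^ 2 - l ^ 2) * (t ^ 2 - 1) :=
    mul_le_mul hf2 hf1 h0f.le (le_trans h0f.le hf2)
  have e2 : c * t ^ 2 * (c * t ^ 2) * ((t ^ 2 - l1 ^ 2) * (l2 ^ 2 - t ^ 2)) ≤
      (t ^ 2 - l ^ 2) * (t ^ 2 - 1) * ((t ^ 2 - l1 ^ 2) * (l2 ^ 2 - t ^ 2)) :=
    mul_le_mul_of_nonneg_right e1 (mul_nonneg hnum hl2t)
  have ht2ge1 : (1:ℝ) ≤ t ^ 2 := by nlinarith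
  have w1 : (t ^ 2 - l1 ^ 2) * (t ^ 2 - l1 ^ 2) ≤ t ^ 2 * t ^ 2 * (t ^ 2 - l1 ^ 2) := by
    apply mul_le_mul_of_nonneg_right _ hnum
    nlinarith only [ht2ge1, hl1, hnum]
  have h2t : 2 * t < l2 := by linarith
  have hl2t4 : l2 ^ 2 ≤ (4/3) * (l2 ^ 2 - t ^ 2) := by nlinarith only [h2t, htpos]
  have hPnn : (0:ℝ) ≤ (t ^ 2 - l ^ 2) * (t ^ 2 - 1) * ((t ^ 2 - l1 ^ 2) * (l2 ^ 2 - t ^ 2)) :=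
    le_trans (by positivity) e2
  calc (t ^ 2 - l1 ^ 2) ^ 2 * (c * l2) ^ 2
      = c ^ 2 * l2 ^ 2 * ((t ^ 2 - l1 ^ 2) * (t ^ 2 - l1 ^ 2)) := by ring
    _ ≤ c ^ 2 * l2 ^ 2 * (t ^ 2 * t ^ 2 * (t ^ 2 - l1 ^ 2)) :=
        mul_le_mul_of_nonneg_left w1 (by positivity)
    _ = c ^ 2 * (t ^ 2 * t ^ 2) * (t ^ 2 - l1 ^ 2) * l2 ^ 2 := by ring
    _ ≤ c ^ 2 * (t ^ 2 * t ^ 2) * (t ^ 2 - l1 ^ 2) * ((4/3) * (l2 ^ 2 - t ^ 2)) :=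
        mul_le_mul_of_nonneg_left hl2t4 (mul_nonneg (by positivity) hnum)
    _ = (4/3) * (c * t ^ 2 * (c * t ^ 2) * ((t ^ 2 - l1 ^ 2) * (l2 ^ 2 - t ^ 2))) := by ring
    _ ≤ (4/3) * ((t ^ 2 - l ^ 2) * (t ^ 2 - 1) * ((t ^ 2 - l1 ^ 2) * (l2 ^ 2 - t ^ 2))) :=
        mul_le_mul_of_nonneg_left e2 (by norm_num)
    _ ≤ 2 ^ 2 * ((t ^ 2 - l ^ 2) * (t ^ 2 - 1) * (t ^ 2 - l1 ^ 2) * (l2 ^ 2 - t ^ 2)) := by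
        nlinarith only [hPnn]

lemma aux_g2 {T : ℝ} (h0 : 0 < l) (h1 : l < 1) (h2 : 1 < l1)
    (hT1 : l1 ≤ T) (htT : T ≤ t) (ht2 : t ≤ l2) :
    (t ^ 2 - l1 ^ 2) /
        Real.sqrt ((t ^ 2 - l ^ 2) * (t ^ 2 - 1) * (t ^ 2 - l1 ^ 2) * (l2 ^ 2 - t ^ 2)) ≤
      1 / ((l1 ^ 2 - 1) / l1 ^ 2 * T * Real.sqrt l2) * (l2 - t) ^ (-(1/2) : ℝ) := by
  have hl1 : (0:ℝ) < l1 := by linarith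
  have hTpos : (0:ℝ) < T := by linarith
  have htpos : (0:ℝ) < t := by linarith
  have hl2 : (0:ℝ) < l2 := by linarith
  have hsq : (0:ℝ) < l1 ^ 2 - 1 := by nlinarith
  have hcpos : (0:ℝ) < (l1 ^ 2 - 1) / l1 ^ 2 := by positivity
  set c := (l1 ^ 2 - 1) / l1 ^ 2 with hc_def
  obtain ⟨hf1, hf2, hnum, hl2t, -⟩ := aux_facts h0 h1 h2 (le_trans hT1 htT) ht2
  have hκ : (0:ℝ) < 1 / (c * T * Real.sqrt l2) := by positivity
  by_cases hte : t = l2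
  · have hz : l2 ^ 2 - t ^ 2 = 0 := by rw [hte]; ring
    have hz2 : l2 - t = 0 := by rw [hte]; ring
    rw [hz, mul_zero, Real.sqrt_zero, div_zero, hz2, Real.zero_rpow (by norm_num), mul_zero]
  · have htl2 : t < l2 := lt_of_le_of_ne ht2 hte
    apply helper_div_sqrt_le hnum (mul_nonneg hκ.le (Real.rpow_nonneg (by linarith) _))
    rw [mul_pow, helper_rpow_sq (by linarith : (0:ℝ) < l2 - t)]
    have hκsq : (1 / (c * T * Real.sqrt l2)) ^ 2 = 1 / (c ^ 2 * T ^ 2 * l2) := by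
      rw [div_pow, one_pow, mul_pow, mul_pow, Real.sq_sqrt hl2.le]
    rw [hκsq]
    have hX : (0:ℝ) < c ^ 2 * T ^ 2 * l2 := by positivity
    have hY : (0:ℝ) < l2 - t := by linarith
    have heqd : 1 / (c ^ 2 * T ^ 2 * l2) * (l2 - t)⁻¹ *
        ((t ^ 2 - l ^ 2) * (t ^ 2 - 1) * (t ^ 2 - l1 ^ 2) * (l2 ^ 2 - t ^ 2)) =
        ((t ^ 2 - l ^ 2) * (t ^ 2 - 1) * (t ^ 2 - l1 ^ 2) * (l2 ^ 2 - t ^ 2)) /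
          (c ^ 2 * T ^ 2 * l2 * (l2 - t)) := by
      rw [eq_div_iff (ne_of_gt (mul_pos hX hY))]
      field_simp
    rw [heqd, le_div_iff₀ (mul_pos hX hY)]
    have h0f : (0:ℝ) < c * t ^ 2 := by positivity
    have e1 : c * t ^ 2 * (c * t ^ 2) ≤ (t ^ 2 - l ^ 2) * (t ^ 2 - 1) :=
      mul_le_mul hf2 hf1 h0f.le (le_trans h0f.le hf2)
    have e2 : c * t ^ 2 * (c * t ^ 2) * ((t ^ 2 - l1 ^ 2) * (l2 ^ 2 - t ^ 2)) ≤
        (t ^ 2 - l ^ 2) * (t ^ 2 - 1) * ((t ^ 2 - l1 ^ 2) * (l2 ^ 2 - t ^ 2)) :=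
      mul_le_mul_of_nonneg_right e1 (mul_nonneg hnum hl2t)
    have w1 : (t ^ 2 - l1 ^ 2) * (t ^ 2 - l1 ^ 2) ≤ t ^ 2 * (t ^ 2 - l1 ^ 2) := by
      apply mul_le_mul_of_nonneg_right _ hnum
      nlinarith only [hl1, sq_nonneg l1]
    have u3 : T ^ 2 ≤ t ^ 2 := by nlinarith only [htT, hTpos]
    have v3 : l2 * (l2 - t) ≤ (l2 + t) * (l2 - t) := by nlinarith only [htpos, htl2]
    have hD1 : (0:ℝ) ≤ c ^ 2 * l2 * (l2 - t) * T ^ 2 :=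
      mul_nonneg (mul_nonneg (mul_nonneg (by positivity) hl2.le) (by linarith)) (by positivity)
    have hD2 : (0:ℝ) ≤ c ^ 2 * l2 * (l2 - t) * (t ^ 2 * (t ^ 2 - l1 ^ 2)) :=
      mul_nonneg (mul_nonneg (mul_nonneg (by positivity) hl2.le) (by linarith))
        (mul_nonneg (by positivity) hnum)
    calc (t ^ 2 - l1 ^ 2) ^ 2 * (c ^ 2 * T ^ 2 * l2 * (l2 - t))
        = c ^ 2 * l2 * (l2 - t) * T ^ 2 * ((t ^ 2 - l1 ^ 2) * (t ^ 2 - l1 ^ 2)) := by ring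
      _ ≤ c ^ 2 * l2 * (l2 - t) * T ^ 2 * (t ^ 2 * (t ^ 2 - l1 ^ 2)) :=
          mul_le_mul_of_nonneg_left w1 hD1
      _ = c ^ 2 * l2 * (l2 - t) * (t ^ 2 * (t ^ 2 - l1 ^ 2)) * T ^ 2 := by ring
      _ ≤ c ^ 2 * l2 * (l2 - t) * (t ^ 2 * (t ^ 2 - l1 ^ 2)) * t ^ 2 :=
          mul_le_mul_of_nonneg_left u3 hD2
      _ = c ^ 2 * (t ^ 2 * t ^ 2) * (t ^ 2 - l1 ^ 2) * (l2 * (l2 - t)) := by ring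
      _ ≤ c ^ 2 * (t ^ 2 * t ^ 2) * (t ^ 2 - l1 ^ 2) * ((l2 + t) * (l2 - t)) :=
          mul_le_mul_of_nonneg_left v3 (mul_nonneg (by positivity) hnum)
      _ = c * t ^ 2 * (c * t ^ 2) * ((t ^ 2 - l1 ^ 2) * (l2 ^ 2 - t ^ 2)) := by ring
      _ ≤ (t ^ 2 - l ^ 2) * (t ^ 2 - 1) * ((t ^ 2 - l1 ^ 2) * (l2 ^ 2 - t ^ 2)) := e2
      _ = (t ^ 2 - l ^ 2) * (t ^ 2 - 1) * (t ^ 2 - l1 ^ 2) * (l2 ^ 2 - t ^ 2) := by ring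

lemma aux_Ir {T l2 : ℝ} :
    (∫ t in T..l2, (l2 - t) ^ (-(1/2) : ℝ)) = 2 * Real.sqrt (l2 - T) := by
  rw [intervalIntegral.integral_comp_sub_left (fun x : ℝ => x ^ (-(1/2) : ℝ)) l2]
  rw [sub_self, integral_rpow (Or.inl (by norm_num))]
  rw [Real.zero_rpow (by norm_num : (-(1/2) : ℝ) + 1 ≠ 0), Real.sqrt_eq_rpow]
  norm_num
  ring

end aux

set_option maxHeartbeats 4000000 in
theorem stmt_18 (l l1 : ℝ) (h0 : 0 < l) (h1 : l < 1) (h2 : 1 < l1) :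
    ∃ N > l1, ∀ l2 : ℝ, N < l2 →
      (∫ t in l1..l2,
          (t ^ 2 -
              (l + l1 - l2 - l * l1 + l * l2 + l1 * l2 +
                  Real.sqrt ((l + l1 - l2 - l * l1 + l * l2 + l1 * l2) ^ 2 - 4 * l * l1 * l2)) /
                2) /
            Real.sqrt ((t ^ 2 - l ^ 2) * (t ^ 2 - 1) * (t ^ 2 - l1 ^ 2) * (l2 ^ 2 - t ^ 2))) <
        0 := by
  have hl1 : (0:ℝ) < l1 := by linarith
  have hl1sq : 0 < l1 ^ 2 - 1 := by nlinarith
  set c : ℝ := (l1 ^ 2 - 1) / l1 ^ 2 with hc_def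
  clear_value c
  have hc : 0 < c := by rw [hc_def]; positivity
  have hc1 : (0:ℝ) < l + l1 - 1 := by linarith
  set B0 : ℝ := (l + l1 - 1) / (4 * (l1 + 2) ^ 3) with hB0_def
  clear_value B0
  have hB0 : 0 < B0 := by rw [hB0_def]; positivity
  set T : ℝ := max (l1 + 1) (8 / (c * B0)) with hT_def
  clear_value T
  have hT1 : l1 + 1 ≤ T := by rw [hT_def]; exact le_max_left _ _
  have hT8 : 8 / (c * B0) ≤ T := by rw [hT_def]; exact le_max_right _ _
  have hTpos : (0:ℝ) < T := lt_of_lt_of_le (by linarith) hT1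
  refine ⟨max (max (l1 + 2) (4 * l1 ^ 2 / (l + l1 - 1))) (max (2 * T) (8 * T / (c * B0))),
    lt_of_lt_of_le (by linarith) ((le_max_left _ _).trans (le_max_left _ _)), ?_⟩
  intro l2 hl2
  have hl2a : l1 + 2 < l2 := lt_of_le_of_lt ((le_max_left _ _).trans (le_max_left _ _)) hl2
  have hl2b : 4 * l1 ^ 2 / (l + l1 - 1) < l2 :=
    lt_of_le_of_lt ((le_max_right _ _).trans (le_max_left _ _)) hl2
  have hl2c : 2 * T < l2 := lt_of_le_of_lt ((le_max_left _ _).trans (le_max_right _ _)) hl2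
  have hl2d : 8 * T / (c * B0) < l2 :=
    lt_of_le_of_lt ((le_max_right _ _).trans (le_max_right _ _)) hl2
  have hl1l2 : l1 < l2 := by linarith
  have hl2pos : (0:ℝ) < l2 := by linarith
  have hTl2 : T < l2 := by linarith
  have hl1T : l1 ≤ T := by linarith
  set B2 : ℝ := (l + l1 - l2 - l * l1 + l * l2 + l1 * l2 +
      Real.sqrt ((l + l1 - l2 - l * l1 + l * l2 + l1 * l2) ^ 2 - 4 * l * l1 * l2)) / 2
    with hB2_def
  clear_value B2
  have hB2ge : (l + l1 - l2 - l * l1 + l * l2 + l1 * l2) / 2 ≤ B2 := by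
    have := Real.sqrt_nonneg ((l + l1 - l2 - l * l1 + l * l2 + l1 * l2) ^ 2 - 4 * l * l1 * l2)
    rw [hB2_def]; linarith
  have hB2nonneg : 0 ≤ B2 := by
    have h' : 0 < l + l1 - l2 - l * l1 + l * l2 + l1 * l2 := by nlinarith
    linarith
  have hKb : (l + l1 - 1) * l2 / 4 ≤ B2 - l1 ^ 2 := by
    have h4 : 4 * l1 ^ 2 < (l + l1 - 1) * l2 := by
      rw [div_lt_iff₀ hc1] at hl2b; linarith
    have h' : 0 < l + l1 - l * l1 := by nlinarith
    have : l + l1 - l2 - l * l1 + l * l2 + l1 * l2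
        = (l + l1 - l * l1) + (l + l1 - 1) * l2 := by ring
    nlinarith [hB2ge]
  -- integrability of w
  have hw_int : IntervalIntegrable
      (fun t => (Real.sqrt ((t ^ 2 - l ^ 2) * (t ^ 2 - 1) * (t ^ 2 - l1 ^ 2) * (l2 ^ 2 - t ^ 2)))⁻¹)
      MeasureTheory.volume l1 l2 := by
    have i1 : IntervalIntegrable (fun x : ℝ => x ^ (-(1/2) : ℝ)) MeasureTheory.volume 0 (l2 - l1) :=
      intervalIntegral.intervalIntegrable_rpow' (by norm_num)
    have i2 := i1.comp_sub_right l1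
    rw [zero_add, sub_add_cancel] at i2
    have i3 := (i1.symm).comp_sub_left l2
    rw [sub_sub_cancel, sub_zero] at i3
    set C0 : ℝ := (Real.sqrt (2 * (l1 ^ 2 - l ^ 2) * (l1 ^ 2 - 1)))⁻¹ with hC0_def
    refine IntervalIntegrable.mono_fun ((i2.const_mul C0).add (i3.const_mul C0)) ?_ ?_
    · apply Measurable.aestronglyMeasurable
      apply Measurable.inv
      exact (Real.continuous_sqrt.comp (by continuity)).measurable
    · rw [Set.uIoc_of_le hl1l2.le]
      refine (MeasureTheory.ae_restrict_iff' measurableSet_Ioc).mpr (Filter.Eventually.of_forall ?_)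
      intro t ht
      have hb := aux_wbound h0 h1 h2 hl2a ht.1 ht.2
      have hqnn : (0:ℝ) ≤ C0 * (t - l1) ^ (-(1/2) : ℝ) + C0 * (l2 - t) ^ (-(1/2) : ℝ) := by
        have := Real.sqrt_nonneg (2 * (l1 ^ 2 - l ^ 2) * (l1 ^ 2 - 1))
        have hC0nn : (0:ℝ) ≤ C0 := by rw [hC0_def]; positivity
        have := Real.rpow_nonneg (by linarith [ht.1] : (0:ℝ) ≤ t - l1) (-(1/2) : ℝ)
        have := Real.rpow_nonneg (by linarith [ht.2] : (0:ℝ) ≤ l2 - t) (-(1/2) : ℝ)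
        positivity
      simp only [Real.norm_eq_abs]
      rw [abs_of_nonneg (inv_nonneg.mpr (Real.sqrt_nonneg _)), abs_of_nonneg hqnn]
      exact hb
  have hw_nonneg : ∀ t : ℝ, 0 ≤
      (Real.sqrt ((t ^ 2 - l ^ 2) * (t ^ 2 - 1) * (t ^ 2 - l1 ^ 2) * (l2 ^ 2 - t ^ 2)))⁻¹ :=
    fun t => inv_nonneg.mpr (Real.sqrt_nonneg _)
  -- integrability of g
  have hg_int : IntervalIntegrable
      (fun t => (t ^ 2 - l1 ^ 2) /
        Real.sqrt ((t ^ 2 - l ^ 2) * (t ^ 2 - 1) * (t ^ 2 - l1 ^ 2) * (l2 ^ 2 - t ^ 2)))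
      MeasureTheory.volume l1 l2 := by
    refine IntervalIntegrable.mono_fun (hw_int.const_mul (l2 ^ 2)) ?_ ?_
    · apply Measurable.aestronglyMeasurable
      apply Measurable.div
      · fun_prop
      · exact (Real.continuous_sqrt.comp (by continuity)).measurable
    · rw [Set.uIoc_of_le hl1l2.le]
      refine (MeasureTheory.ae_restrict_iff' measurableSet_Ioc).mpr (Filter.Eventually.of_forall ?_)
      intro t ht
      have hnum : (0:ℝ) ≤ t ^ 2 - l1 ^ 2 := by nlinarith only [ht.1, ht.2, hl1]
      have hnum2 : t ^ 2 - l1 ^ 2 ≤ l2 ^ 2 := by nlinarith only [ht.1, ht.2, hl1]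
      simp only [Real.norm_eq_abs]
      rw [abs_of_nonneg (div_nonneg hnum (Real.sqrt_nonneg _)),
        abs_of_nonneg (mul_nonneg (by positivity) (inv_nonneg.mpr (Real.sqrt_nonneg _)))]
      rw [mul_comm, ← div_eq_mul_inv]
      exact helper_div_le_div hnum2 (Real.sqrt_nonneg _)
  -- splitting of the integral
  have hsplit : (∫ t in l1..l2,
      (t ^ 2 - B2) /
        Real.sqrt ((t ^ 2 - l ^ 2) * (t ^ 2 - 1) * (t ^ 2 - l1 ^ 2) * (l2 ^ 2 - t ^ 2)))
      = (∫ t in l1..l2, (t ^ 2 - l1 ^ 2) /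
          Real.sqrt ((t ^ 2 - l ^ 2) * (t ^ 2 - 1) * (t ^ 2 - l1 ^ 2) * (l2 ^ 2 - t ^ 2)))
        - (B2 - l1 ^ 2) * ∫ t in l1..l2,
            (Real.sqrt ((t ^ 2 - l ^ 2) * (t ^ 2 - 1) * (t ^ 2 - l1 ^ 2) * (l2 ^ 2 - t ^ 2)))⁻¹ := by
    rw [← intervalIntegral.integral_const_mul,
      ← intervalIntegral.integral_sub hg_int (hw_int.const_mul _)]
    apply intervalIntegral.integral_congr
    intro t _
    simp only [div_eq_mul_inv]
    ring
  -- lower bound for W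
  have hW : ((l1 + 2) ^ 3 * l2)⁻¹ ≤ ∫ t in l1..l2,
      (Real.sqrt ((t ^ 2 - l ^ 2) * (t ^ 2 - 1) * (t ^ 2 - l1 ^ 2) * (l2 ^ 2 - t ^ 2)))⁻¹ := by
    have hsubW : Set.uIcc (l1 + 1) (l1 + 2) ⊆ Set.uIcc l1 l2 := by
      rw [Set.uIcc_of_le (by linarith : l1 + 1 ≤ l1 + 2), Set.uIcc_of_le hl1l2.le]
      exact Set.Icc_subset_Icc (by linarith) (by linarith)
    have hwsub := hw_int.mono_set hsubW
    have step1 : ((l1 + 2) ^ 3 * l2)⁻¹ ≤ ∫ t in (l1 + 1)..(l1 + 2),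
        (Real.sqrt ((t ^ 2 - l ^ 2) * (t ^ 2 - 1) * (t ^ 2 - l1 ^ 2) * (l2 ^ 2 - t ^ 2)))⁻¹ := by
      have hmono := intervalIntegral.integral_mono_on (by linarith : l1 + 1 ≤ l1 + 2)
        (intervalIntegrable_const (c := ((l1 + 2) ^ 3 * l2)⁻¹)) hwsub
        (fun t ht => aux_wlow h0 h1 h2 hl2a ht.1 ht.2)
      rw [intervalIntegral.integral_const, smul_eq_mul] at hmono
      calc ((l1 + 2) ^ 3 * l2)⁻¹ = (l1 + 2 - (l1 + 1)) * ((l1 + 2) ^ 3 * l2)⁻¹ := by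
            rw [show l1 + 2 - (l1 + 1) = (1:ℝ) by ring, one_mul]
        _ ≤ _ := hmono
    have step2 : (∫ t in (l1 + 1)..(l1 + 2),
        (Real.sqrt ((t ^ 2 - l ^ 2) * (t ^ 2 - 1) * (t ^ 2 - l1 ^ 2) * (l2 ^ 2 - t ^ 2)))⁻¹)
        ≤ ∫ t in l1..l2,
        (Real.sqrt ((t ^ 2 - l ^ 2) * (t ^ 2 - 1) * (t ^ 2 - l1 ^ 2) * (l2 ^ 2 - t ^ 2)))⁻¹ :=
      intervalIntegral.integral_mono_interval (by linarith) (by linarith) (by linarith)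
        (MeasureTheory.ae_of_all _ (fun x => hw_nonneg x)) hw_int
    linarith only [step1, step2]
  -- upper bound for A
  have hA : (∫ t in l1..l2, (t ^ 2 - l1 ^ 2) /
      Real.sqrt ((t ^ 2 - l ^ 2) * (t ^ 2 - 1) * (t ^ 2 - l1 ^ 2) * (l2 ^ 2 - t ^ 2)))
      ≤ B0 / 2 := by
    have hsubl : Set.uIcc l1 T ⊆ Set.uIcc l1 l2 := by
      rw [Set.uIcc_of_le hl1T, Set.uIcc_of_le hl1l2.le]
      exact Set.Icc_subset_Icc le_rfl hTl2.le
    have hsubr : Set.uIcc T l2 ⊆ Set.uIcc l1 l2 := by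
      rw [Set.uIcc_of_le hTl2.le, Set.uIcc_of_le hl1l2.le]
      exact Set.Icc_subset_Icc hl1T le_rfl
    have hgl := hg_int.mono_set hsubl
    have hgr := hg_int.mono_set hsubr
    have hsplitA := intervalIntegral.integral_add_adjacent_intervals hgl hgr
    have hcl2 : (0:ℝ) < c * l2 := mul_pos hc hl2pos
    have hA1 : (∫ t in l1..T, (t ^ 2 - l1 ^ 2) /
        Real.sqrt ((t ^ 2 - l ^ 2) * (t ^ 2 - 1) * (t ^ 2 - l1 ^ 2) * (l2 ^ 2 - t ^ 2)))
        ≤ (T - l1) * (2 / (c * l2)) := by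
      have hmono := intervalIntegral.integral_mono_on hl1T hgl
        (intervalIntegrable_const (c := 2 / (c * l2))) ?_
      · rw [intervalIntegral.integral_const, smul_eq_mul] at hmono
        exact hmono
      · intro t ht
        have hb := aux_g1 h0 h1 h2 ht.1 ht.2 hl2c
        rw [← hc_def] at hb
        exact hb
    have hA1' : (T - l1) * (2 / (c * l2)) ≤ B0 / 4 := by
      have h8 : 8 * T < l2 * (c * B0) := by
        rw [div_lt_iff₀ (by positivity)] at hl2d; exact hl2d
      rw [mul_div_assoc', div_le_div_iff₀ hcl2 (by norm_num)]
      nlinarith only [h8, hl1, hl1T, h2]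
    have hrint : IntervalIntegrable (fun t => (l2 - t) ^ (-(1/2) : ℝ))
        MeasureTheory.volume T l2 := by
      have i1 : IntervalIntegrable (fun x : ℝ => x ^ (-(1/2) : ℝ)) MeasureTheory.volume
          (l2 - T) 0 := intervalIntegral.intervalIntegrable_rpow' (by norm_num)
      have i3 := i1.comp_sub_left l2
      rwa [sub_sub_cancel, sub_zero] at i3
    have hIr : (∫ t in T..l2, (l2 - t) ^ (-(1/2) : ℝ)) = 2 * Real.sqrt (l2 - T) := aux_Ir
    have hA2 : (∫ t in T..l2, (t ^ 2 - l1 ^ 2) /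
        Real.sqrt ((t ^ 2 - l ^ 2) * (t ^ 2 - 1) * (t ^ 2 - l1 ^ 2) * (l2 ^ 2 - t ^ 2)))
        ≤ 1 / (c * T * Real.sqrt l2) * (2 * Real.sqrt (l2 - T)) := by
      calc (∫ t in T..l2, (t ^ 2 - l1 ^ 2) /
          Real.sqrt ((t ^ 2 - l ^ 2) * (t ^ 2 - 1) * (t ^ 2 - l1 ^ 2) * (l2 ^ 2 - t ^ 2)))
          ≤ ∫ t in T..l2, 1 / (c * T * Real.sqrt l2) * (l2 - t) ^ (-(1/2) : ℝ) := by
            apply intervalIntegral.integral_mono_on hTl2.le hgr (hrint.const_mul _)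
            intro t ht
            have hb := aux_g2 h0 h1 h2 hl1T ht.1 ht.2
            rw [← hc_def] at hb
            exact hb
        _ = 1 / (c * T * Real.sqrt l2) * ∫ t in T..l2, (l2 - t) ^ (-(1/2) : ℝ) :=
            intervalIntegral.integral_const_mul _ _
        _ = _ := by rw [hIr]
    have hA2' : 1 / (c * T * Real.sqrt l2) * (2 * Real.sqrt (l2 - T)) ≤ B0 / 4 := by
      have hs : Real.sqrt (l2 - T) ≤ Real.sqrt l2 := Real.sqrt_le_sqrt (by linarith)
      have hsl2 : 0 < Real.sqrt l2 := Real.sqrt_pos.mpr hl2pos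
      have step : 1 / (c * T * Real.sqrt l2) * (2 * Real.sqrt (l2 - T)) ≤
          1 / (c * T * Real.sqrt l2) * (2 * Real.sqrt l2) :=
        mul_le_mul_of_nonneg_left (by linarith) (by positivity)
      have heq : 1 / (c * T * Real.sqrt l2) * (2 * Real.sqrt l2) = 2 / (c * T) := by
        rw [div_mul_eq_mul_div, one_mul, div_eq_div_iff (by positivity) (by positivity)]
        ring
      have hfin : 2 / (c * T) ≤ B0 / 4 := by
        have h8' : 8 ≤ T * (c * B0) := by
          rw [div_le_iff₀ (by positivity)] at hT8; exact hT8
        rw [div_le_div_iff₀ (by positivity) (by norm_num)]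
        nlinarith only [h8']
      linarith only [step, heq, hfin]
    calc (∫ t in l1..l2, (t ^ 2 - l1 ^ 2) /
        Real.sqrt ((t ^ 2 - l ^ 2) * (t ^ 2 - 1) * (t ^ 2 - l1 ^ 2) * (l2 ^ 2 - t ^ 2)))
        = (∫ t in l1..T, (t ^ 2 - l1 ^ 2) /
            Real.sqrt ((t ^ 2 - l ^ 2) * (t ^ 2 - 1) * (t ^ 2 - l1 ^ 2) * (l2 ^ 2 - t ^ 2)))
          + ∫ t in T..l2, (t ^ 2 - l1 ^ 2) /
            Real.sqrt ((t ^ 2 - l ^ 2) * (t ^ 2 - 1) * (t ^ 2 - l1 ^ 2) * (l2 ^ 2 - t ^ 2)) :=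
          hsplitA.symm
      _ ≤ B0 / 4 + B0 / 4 := add_le_add (hA1.trans hA1') (hA2.trans hA2')
      _ = B0 / 2 := by ring
  -- assemble
  have hBW : B0 ≤ (B2 - l1 ^ 2) * ∫ t in l1..l2,
      (Real.sqrt ((t ^ 2 - l ^ 2) * (t ^ 2 - 1) * (t ^ 2 - l1 ^ 2) * (l2 ^ 2 - t ^ 2)))⁻¹ := by
    have hWnn : (0:ℝ) ≤ ((l1 + 2) ^ 3 * l2)⁻¹ := by positivity
    have hKbnn : (0:ℝ) ≤ (l + l1 - 1) * l2 / 4 := by positivity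
    calc B0 = ((l + l1 - 1) * l2 / 4) * ((l1 + 2) ^ 3 * l2)⁻¹ := by
          rw [hB0_def]; field_simp
      _ ≤ _ := mul_le_mul hKb hW hWnn (by linarith)
  rw [hsplit]
  linarith only [hA, hBW, hB0]
end
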